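/- arXiv:1502.03999 — 6 statements merged into one kernel-verified Lean document; each statement's English description precedes it below -/
import Mathlib

section
/- Let α be a nonzero complex number and n ≥ 2. Let G = ℂ^{n−1} ⋊_φ ℤ be the semidirect product of the additive group of row vectors ℂ^{n−1} with ℤ, where φ(k)(a) = α^k · a · J_{n−1}^k, so that (a₁, k₁)(a₂, k₂) = (a₁ + α^{k₁} a₂ J_{n−1}^{k₁}, k₁ + k₂). Then the map Θ : G → GL(n,ℂ) sending (a, k) to the block matrix with (1,1)-entry α^k, first-row tail a·J_{n−1}^{−k}, lower-right (n−1)×(n−1) block J_{n−1}^{−k}, and zeros in the rest of the first column, is a group homomorphism; moreover, if n ≥ 3 then Θ is injective. -/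
open Matrix

noncomputable section

/-- Generalized binomial coefficient C(m,k) for m : ℤ, as a complex number. -/
def gbinom (m : ℤ) (k : ℕ) : ℂ :=
  (∏ i ∈ Finset.range k, ((m : ℂ) - i)) / (Nat.factorial k)

/-- The n×n nilpotent Jordan matrix N. -/
def Nmat (n : ℕ) : Matrix (Fin n) (Fin n) ℂ :=
  Matrix.of fun i j => if (i : ℕ) + 1 = (j : ℕ) then 1 else 0

/-- The unipotent Jordan block J = I + N. -/
def Jmat (n : ℕ) : Matrix (Fin n) (Fin n) ℂ := 1 + Nmat n

lemma Jmat_blockTriangular (n : ℕ) : (Jmat n).BlockTriangular id := by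
  intro i j hij
  have hji : (j : ℕ) < (i : ℕ) := hij
  simp only [Jmat, Matrix.add_apply, Matrix.one_apply, Nmat, Matrix.of_apply]
  rw [if_neg (by intro h; subst h; exact lt_irrefl _ hji), if_neg (by omega)]
  simp

lemma Jmat_isUnit (n : ℕ) : IsUnit (Jmat n) := by
  rw [Matrix.isUnit_iff_isUnit_det,
    Matrix.det_of_upperTriangular (Jmat_blockTriangular n)]
  have : ∀ i : Fin n, Jmat n i i = 1 := by
    intro i
    simp [Jmat, Matrix.one_apply, Nmat]
  simp [this]

/-- Integer powers (positive and negative) of the unipotent Jordan block. -/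
def Jz (n : ℕ) (m : ℤ) : Matrix (Fin n) (Fin n) ℂ :=
  (((Jmat_isUnit n).unit ^ m : (Matrix (Fin n) (Fin n) ℂ)ˣ) : Matrix (Fin n) (Fin n) ℂ)



lemma Jz_add (m : ℕ) (a b : ℤ) : Jz m (a + b) = Jz m a * Jz m b := by
  simp [Jz, _root_.zpow_add, Units.val_mul]

lemma Jz_zero (m : ℕ) : Jz m 0 = 1 := by simp [Jz]

lemma Jz_one (m : ℕ) : Jz m 1 = Jmat m := by simp [Jz]

def UT {m : ℕ} (M : Matrix (Fin m) (Fin m) ℂ) : Prop :=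
  M.BlockTriangular id ∧ ∀ i, M i i = 1

lemma UT_one {m : ℕ} : UT (1 : Matrix (Fin m) (Fin m) ℂ) :=
  ⟨Matrix.blockTriangular_one, fun i => by simp⟩

lemma tri_diag_mul {m : ℕ} {A B : Matrix (Fin m) (Fin m) ℂ}
    (hA : A.BlockTriangular id) (hB : B.BlockTriangular id) (i : Fin m) :
    (A * B) i i = A i i * B i i := by
  rw [Matrix.mul_apply]
  rw [Finset.sum_eq_single i]
  · intro j _ hji
    rcases lt_or_gt_of_ne hji with h | h
    · rw [hA h, zero_mul]
    · rw [hB h, mul_zero]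
  · simp

lemma UT_mul {m : ℕ} {A B : Matrix (Fin m) (Fin m) ℂ} (hA : UT A) (hB : UT B) :
    UT (A * B) :=
  ⟨hA.1.mul hB.1, fun i => by rw [tri_diag_mul hA.1 hB.1, hA.2, hB.2, one_mul]⟩

lemma UT_J (m : ℕ) : UT (Jmat m) :=
  ⟨Jmat_blockTriangular m, fun i => by simp [Jmat, Matrix.one_apply, Nmat]⟩

lemma UT_Jz_neg_one (m : ℕ) : UT (Jz m (-1)) := by
  have h1 : Jmat m * Jz m (-1) = 1 := by
    rw [← Jz_one m, ← Jz_add]; simp [Jz_zero]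
  have hinv : Jz m (-1) = (Jmat m)⁻¹ := (Matrix.inv_eq_right_inv h1).symm
  haveI : Invertible (Jmat m) := (Jmat_isUnit m).invertible
  have htri : (Jz m (-1)).BlockTriangular id := by
    rw [hinv]; exact Matrix.blockTriangular_inv_of_blockTriangular (Jmat_blockTriangular m)
  refine ⟨htri, fun i => ?_⟩
  have := congrFun (congrFun h1 i) i
  rw [tri_diag_mul (Jmat_blockTriangular m) htri, (UT_J m).2, one_mul] at this
  simpa using this

lemma UT_Jz (m : ℕ) (z : ℤ) : UT (Jz m z) := by
  induction z using Int.induction_on with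
  | zero => rw [Jz_zero]; exact UT_one
  | succ k ih => rw [Jz_add]; exact UT_mul ih (Jz_one m ▸ UT_J m)
  | pred k ih => rw [show (-(k:ℤ) - 1) = -k + -1 by ring, Jz_add]; exact UT_mul ih (UT_Jz_neg_one m)

lemma mul_apply01 {m : ℕ} (hm : 2 ≤ m) {A B : Matrix (Fin m) (Fin m) ℂ}
    (hA : UT A) (hB : UT B) :
    (A * B) ⟨0, by omega⟩ ⟨1, by omega⟩
      = A ⟨0, by omega⟩ ⟨1, by omega⟩ + B ⟨0, by omega⟩ ⟨1, by omega⟩ := by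
  set i0 : Fin m := ⟨0, by omega⟩
  set i1 : Fin m := ⟨1, by omega⟩
  rw [Matrix.mul_apply]
  have key : ∀ j : Fin m, A i0 j * B j i1 =
      if j = i1 then A i0 i1 else if j = i0 then B i0 i1 else 0 := by
    intro j
    rcases eq_or_ne j i1 with rfl | h1
    · simp [hB.2]
    rcases eq_or_ne j i0 with rfl | h0
    · simp [hA.2, h1]
    have hj : (1 : ℕ) < (j : ℕ) := by
      have : (j : ℕ) ≠ 0 := fun h => h0 (Fin.ext h)
      have : (j : ℕ) ≠ 1 := fun h => h1 (Fin.ext h)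
      omega
    have hlt : id i1 < id j := by simpa [i1, Fin.lt_def] using hj
    rw [hB.1 hlt, mul_zero, if_neg h1, if_neg h0]
  have h01 : i1 ≠ i0 := by simp [i0, i1, Fin.ext_iff]
  have split : ∀ x : Fin m, (if x = i1 then A i0 i1 else if x = i0 then B i0 i1 else 0)
      = (if x = i1 then A i0 i1 else 0) + (if x = i0 then B i0 i1 else 0) := by
    intro x
    rcases eq_or_ne x i1 with rfl | h1
    · simp [h01]
    rcases eq_or_ne x i0 with rfl | h0
    · simp [h1]
    · simp [h0, h1]
  simp only [key, split, Finset.sum_add_distrib, Finset.sum_ite_eq', Finset.mem_univ, if_pos]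

lemma Jz_01 (m : ℕ) (hm : 2 ≤ m) (z : ℤ) :
    Jz m z ⟨0, by omega⟩ ⟨1, by omega⟩ = (z : ℂ) := by
  set i0 : Fin m := ⟨0, by omega⟩
  set i1 : Fin m := ⟨1, by omega⟩
  have hJ01 : Jmat m i0 i1 = 1 := by
    simp [Jmat, Matrix.one_apply, Nmat, i0, i1, Fin.ext_iff]
  have hneg : Jz m (-1) i0 i1 = -1 := by
    have h1 : Jmat m * Jz m (-1) = 1 := by
      rw [← Jz_one m, ← Jz_add]; simp [Jz_zero]
    have := congrFun (congrFun h1 i0) i1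
    rw [mul_apply01 hm (UT_J m) (UT_Jz_neg_one m)] at this
    have h01 : i0 ≠ i1 := by simp [i0, i1, Fin.ext_iff]
    rw [Matrix.one_apply_ne h01, hJ01] at this
    linear_combination this
  induction z using Int.induction_on with
  | zero => rw [Jz_zero]; simp [Matrix.one_apply, i0, i1, Fin.ext_iff]
  | succ k ih =>
    rw [Jz_add, mul_apply01 hm (UT_Jz m k) (Jz_one m ▸ UT_J m), ih, Jz_one, hJ01]
    push_cast; ring
  | pred k ih =>
    rw [show (-(k:ℤ) - 1) = -k + -1 by ring, Jz_add,
      mul_apply01 hm (UT_Jz m (-k)) (UT_Jz_neg_one m), ih, hneg]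
    push_cast; ring


/-- The map Θ from the semidirect product `ℂ^{n−1} ⋊ ℤ` (with `(a₁,k₁)(a₂,k₂) =
(a₁ + α^{k₁} a₂ J^{k₁}, k₁+k₂)`) to GL(n,ℂ), written as a block matrix. -/
def Theta (α : ℂ) (m : ℕ) (a : Fin m → ℂ) (k : ℤ) :
    Matrix (Fin 1 ⊕ Fin m) (Fin 1 ⊕ Fin m) ℂ :=
  Matrix.fromBlocks (Matrix.of fun _ _ => α ^ k)
    (Matrix.of fun _ j => Matrix.vecMul a (Jz m (-k)) j)
    0 (Jz m (-k))

/-- Θ is a group homomorphism from `ℂ^{n−1} ⋊ ℤ` to GL(n,ℂ) (its values are invertible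
matrices and it is multiplicative for the semidirect product law); moreover if `n ≥ 3`
then Θ is injective. -/
theorem stmt3 (α : ℂ) (hα : α ≠ 0) (n : ℕ) (hn : 2 ≤ n) :
    (∀ a k, IsUnit (Theta α (n - 1) a k))
    ∧ (∀ (a₁ a₂ : Fin (n - 1) → ℂ) (k₁ k₂ : ℤ),
        Theta α (n - 1) (a₁ + α ^ k₁ • Matrix.vecMul a₂ (Jz (n - 1) k₁)) (k₁ + k₂)
          = Theta α (n - 1) a₁ k₁ * Theta α (n - 1) a₂ k₂)
    ∧ (3 ≤ n → ∀ (a₁ a₂ : Fin (n - 1) → ℂ) (k₁ k₂ : ℤ),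
        Theta α (n - 1) a₁ k₁ = Theta α (n - 1) a₂ k₂ → a₁ = a₂ ∧ k₁ = k₂) := by
  refine ⟨?_, ?_, ?_⟩
  · intro a k
    rw [Matrix.isUnit_iff_isUnit_det, Theta, Matrix.det_fromBlocks_zero₂₁]
    apply IsUnit.mul
    · rw [Matrix.det_fin_one]
      exact isUnit_iff_ne_zero.mpr (zpow_ne_zero k hα)
    · exact (Matrix.isUnit_iff_isUnit_det _).1 ⟨(Jmat_isUnit _).unit ^ (-k), rfl⟩
  · intro a₁ a₂ k₁ k₂
    have e1 : Jz (n-1) (-(k₁+k₂)) = Jz (n-1) (-k₁) * Jz (n-1) (-k₂) := by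
      rw [← Jz_add]; congr 1; ring
    have e2 : Jz (n-1) k₁ * Jz (n-1) (-(k₁+k₂)) = Jz (n-1) (-k₂) := by
      rw [← Jz_add]; congr 1; ring
    have key : Matrix.vecMul (a₁ + α ^ k₁ • Matrix.vecMul a₂ (Jz (n-1) k₁)) (Jz (n-1) (-(k₁+k₂)))
        = (α ^ k₁ • Matrix.vecMul a₂ (Jz (n-1) (-k₂)))
          + Matrix.vecMul (Matrix.vecMul a₁ (Jz (n-1) (-k₁))) (Jz (n-1) (-k₂)) := by
      rw [Matrix.add_vecMul, Matrix.smul_vecMul, Matrix.vecMul_vecMul, e2, e1,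
        ← Matrix.vecMul_vecMul, add_comm]
    rw [Theta, Theta, Theta, Matrix.fromBlocks_multiply]
    ext i j
    rcases i with i | i <;> rcases j with j | j
    · simp [Matrix.mul_apply, zpow_add₀ hα]
    · have hkey := congrFun key j
      simp only [Matrix.fromBlocks_apply₁₂, Matrix.add_apply, Matrix.of_apply]
      rw [hkey, Pi.add_apply, Pi.smul_apply, smul_eq_mul]
      congr 1
      simp [Matrix.mul_apply]
    · simp
    · simpa using congrFun (congrFun e1 i) j
  · intro h3 a₁ a₂ k₁ k₂ h
    have hm2 : 2 ≤ n - 1 := by omega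
    have hJ : Jz (n-1) (-k₁) = Jz (n-1) (-k₂) := by
      ext i j
      have := congrFun (congrFun h (Sum.inr i)) (Sum.inr j)
      simpa [Theta] using this
    have hk : k₁ = k₂ := by
      have h01 := congrFun (congrFun hJ ⟨0, by omega⟩) ⟨1, by omega⟩
      rw [Jz_01 _ hm2 (-k₁), Jz_01 _ hm2 (-k₂)] at h01
      exact neg_inj.mp (by exact_mod_cast h01)
    subst hk
    refine ⟨?_, rfl⟩
    have hB : Matrix.vecMul a₁ (Jz (n-1) (-k₁)) = Matrix.vecMul a₂ (Jz (n-1) (-k₁)) := by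
      funext j
      have := congrFun (congrFun h (Sum.inl 0)) (Sum.inr j)
      simpa [Theta] using this
    have cancel : ∀ a : Fin (n-1) → ℂ,
        Matrix.vecMul (Matrix.vecMul a (Jz (n-1) (-k₁))) (Jz (n-1) k₁) = a := by
      intro a
      rw [Matrix.vecMul_vecMul, ← Jz_add]
      simp [Jz_zero]
    rw [← cancel a₁, hB, cancel a₂]

end
end

section
/- Let Γ be a group, h : Γ → ℤ a group homomorphism, α a nonzero complex number, n ≥ 2, and z̃ : Γ → ℂ^{n−1} any map (row vectors). Define ρ̃(γ) to be the n×n block matrix with (1,1)-entry α^{h(γ)}, first-row tail z̃(γ)·J_{n−1}^{−h(γ)}, lower-right (n−1)×(n−1) block J_{n−1}^{−h(γ)}, and zeros in the rest of the first column. Then ρ̃ : Γ → GL(n,ℂ) is a group homomorphism if and only if z̃(γ₁γ₂) = z̃(γ₁) + α^{h(γ₁)} z̃(γ₂) J_{n−1}^{h(γ₁)} for all γ₁, γ₂ ∈ Γ. -/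
open Matrix

noncomputable section

/-- The candidate representation ρ̃ : block matrix with (1,1)-entry `α^{h(γ)}`,
first-row tail `z̃(γ)·J^{−h(γ)}`, lower-right block `J^{−h(γ)}` and zeros below. -/
def RhoTilde (Γ : Type*) (α : ℂ) (m : ℕ) (h : Γ → ℤ) (ztil : Γ → Fin m → ℂ) (γ : Γ) :
    Matrix (Fin 1 ⊕ Fin m) (Fin 1 ⊕ Fin m) ℂ :=
  Matrix.fromBlocks (Matrix.of fun _ _ => α ^ h γ)
    (Matrix.of fun _ j => Matrix.vecMul (ztil γ) (Jz m (-(h γ))) j)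
    0 (Jz m (-(h γ)))

lemma vecMul_Jz_Jz (m : ℕ) (a b : ℤ) (v : Fin m → ℂ) :
    Matrix.vecMul (Matrix.vecMul v (Jz m a)) (Jz m b) = Matrix.vecMul v (Jz m (a + b)) := by
  rw [Matrix.vecMul_vecMul, ← Jz_add]

lemma vecMul_Jz_inj (m : ℕ) (t : ℤ) (v w : Fin m → ℂ)
    (H : Matrix.vecMul v (Jz m t) = Matrix.vecMul w (Jz m t)) : v = w := by
  have h2 := congrArg (fun u => Matrix.vecMul u (Jz m (-t))) H
  simp only [vecMul_Jz_Jz, show t + -t = (0:ℤ) by ring, Jz_zero, Matrix.vecMul_one] at h2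
  exact h2

lemma row_mul_mat {m : ℕ} (v : Fin m → ℂ) (M : Matrix (Fin m) (Fin m) ℂ) :
    (Matrix.of fun (_ : Fin 1) j => v j) * M = Matrix.of fun (_ : Fin 1) j => Matrix.vecMul v M j := by
  ext i j
  simp [Matrix.mul_apply, Matrix.vecMul, dotProduct]

lemma scalar_mul_row {m : ℕ} (c : ℂ) (v : Fin m → ℂ) :
    (Matrix.of fun (_ _ : Fin 1) => c) * (Matrix.of fun (_ : Fin 1) j => v j)
      = Matrix.of fun (_ : Fin 1) j => (c • v) j := by
  ext i j
  simp [Matrix.mul_apply]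

lemma row_add_row {m : ℕ} (v w : Fin m → ℂ) :
    (Matrix.of fun (_ : Fin 1) j => v j) + (Matrix.of fun (_ : Fin 1) j => w j)
      = Matrix.of fun (_ : Fin 1) j => (v + w) j := by
  ext i j
  simp

lemma row_eq_row {m : ℕ} (v w : Fin m → ℂ) :
    (Matrix.of fun (_ : Fin 1) j => v j) = (Matrix.of fun (_ : Fin 1) j => w j) ↔ v = w := by
  constructor
  · intro H
    funext j
    exact congrFun (congrFun H 0) j
  · intro H
    rw [H]

lemma key (α : ℂ) (hα : α ≠ 0) (m : ℕ) (a b : ℤ) (zab za zb : Fin m → ℂ) :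
    (Matrix.fromBlocks
        (Matrix.of fun _ _ => α ^ (a + b) : Matrix (Fin 1) (Fin 1) ℂ)
        (Matrix.of fun _ j => Matrix.vecMul zab (Jz m (-(a + b))) j : Matrix (Fin 1) (Fin m) ℂ)
        (0 : Matrix (Fin m) (Fin 1) ℂ) (Jz m (-(a + b)))
      = Matrix.fromBlocks
          (Matrix.of fun _ _ => α ^ a : Matrix (Fin 1) (Fin 1) ℂ)
          (Matrix.of fun _ j => Matrix.vecMul za (Jz m (-a)) j : Matrix (Fin 1) (Fin m) ℂ)
          (0 : Matrix (Fin m) (Fin 1) ℂ) (Jz m (-a))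
        * Matrix.fromBlocks
            (Matrix.of fun _ _ => α ^ b : Matrix (Fin 1) (Fin 1) ℂ)
            (Matrix.of fun _ j => Matrix.vecMul zb (Jz m (-b)) j : Matrix (Fin 1) (Fin m) ℂ)
            (0 : Matrix (Fin m) (Fin 1) ℂ) (Jz m (-b)))
    ↔ zab = za + α ^ a • Matrix.vecMul zb (Jz m a) := by
  rw [Matrix.fromBlocks_multiply, Matrix.fromBlocks_inj]
  have hA : (Matrix.of fun _ _ => α ^ (a + b) : Matrix (Fin 1) (Fin 1) ℂ)
      = (Matrix.of fun _ _ => α ^ a : Matrix (Fin 1) (Fin 1) ℂ)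
          * (Matrix.of fun _ _ => α ^ b : Matrix (Fin 1) (Fin 1) ℂ)
        + (Matrix.of fun _ j => Matrix.vecMul za (Jz m (-a)) j : Matrix (Fin 1) (Fin m) ℂ)
          * (0 : Matrix (Fin m) (Fin 1) ℂ) := by
    ext i j
    simp [Matrix.mul_apply, zpow_add₀ hα]
  have hD : Jz m (-(a + b))
      = (0 : Matrix (Fin m) (Fin 1) ℂ)
          * (Matrix.of fun _ j => Matrix.vecMul zb (Jz m (-b)) j : Matrix (Fin 1) (Fin m) ℂ)
        + Jz m (-a) * Jz m (-b) := by
    rw [Matrix.zero_mul, zero_add, ← Jz_add]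
    ring_nf
  have hC : (0 : Matrix (Fin m) (Fin 1) ℂ)
      = (0 : Matrix (Fin m) (Fin 1) ℂ) * (Matrix.of fun _ _ => α ^ b : Matrix (Fin 1) (Fin 1) ℂ)
        + Jz m (-a) * (0 : Matrix (Fin m) (Fin 1) ℂ) := by simp
  have hB : ((Matrix.of fun _ j => Matrix.vecMul zab (Jz m (-(a + b))) j : Matrix (Fin 1) (Fin m) ℂ)
      = (Matrix.of fun _ _ => α ^ a : Matrix (Fin 1) (Fin 1) ℂ)
          * (Matrix.of fun _ j => Matrix.vecMul zb (Jz m (-b)) j : Matrix (Fin 1) (Fin m) ℂ)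
        + (Matrix.of fun _ j => Matrix.vecMul za (Jz m (-a)) j : Matrix (Fin 1) (Fin m) ℂ)
          * Jz m (-b))
      ↔ zab = za + α ^ a • Matrix.vecMul zb (Jz m a) := by
    have hrow : ((Matrix.of fun _ j => Matrix.vecMul zab (Jz m (-(a + b))) j : Matrix (Fin 1) (Fin m) ℂ)
        = (Matrix.of fun _ _ => α ^ a : Matrix (Fin 1) (Fin 1) ℂ)
            * (Matrix.of fun _ j => Matrix.vecMul zb (Jz m (-b)) j : Matrix (Fin 1) (Fin m) ℂ)
          + (Matrix.of fun _ j => Matrix.vecMul za (Jz m (-a)) j : Matrix (Fin 1) (Fin m) ℂ)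
            * Jz m (-b))
        ↔ Matrix.vecMul zab (Jz m (-(a + b)))
          = α ^ a • Matrix.vecMul zb (Jz m (-b)) + Matrix.vecMul za (Jz m (-(a + b))) := by
      rw [scalar_mul_row, row_mul_mat, row_add_row, row_eq_row, vecMul_Jz_Jz,
        show -a + -b = -(a+b) by ring]
    rw [hrow]
    constructor
    · intro H
      have h2 := congrArg (fun u => Matrix.vecMul u (Jz m (a + b))) H
      simp only [Matrix.add_vecMul, Matrix.smul_vecMul, vecMul_Jz_Jz] at h2
      have e1 : -(a + b) + (a + b) = 0 := by ring
      have e2 : -b + (a + b) = a := by ring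
      rw [e1, e2, Jz_zero, Matrix.vecMul_one, Matrix.vecMul_one] at h2
      rw [h2]
      abel
    · intro H
      rw [H, Matrix.add_vecMul, Matrix.smul_vecMul, vecMul_Jz_Jz,
        show a + -(a + b) = -b by ring]
      abel
  constructor
  · rintro ⟨-, h2, -, -⟩
    exact hB.mp h2
  · intro H
    exact ⟨hA, hB.mpr H, hC, hD⟩

/-- ρ̃ is a group homomorphism into GL(n,ℂ) if and only if
`z̃(γ₁γ₂) = z̃(γ₁) + α^{h(γ₁)} z̃(γ₂) J^{h(γ₁)}` for all γ₁, γ₂. -/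
theorem stmt4 (Γ : Type*) [Group Γ] (h : Γ → ℤ)
    (hh : ∀ a b : Γ, h (a * b) = h a + h b)
    (α : ℂ) (hα : α ≠ 0) (n : ℕ) (hn : 2 ≤ n) (ztil : Γ → Fin (n - 1) → ℂ) :
    (∀ γ₁ γ₂ : Γ,
        RhoTilde Γ α (n - 1) h ztil (γ₁ * γ₂)
          = RhoTilde Γ α (n - 1) h ztil γ₁ * RhoTilde Γ α (n - 1) h ztil γ₂)
    ↔ (∀ γ₁ γ₂ : Γ,
        ztil (γ₁ * γ₂)
          = ztil γ₁ + α ^ h γ₁ • Matrix.vecMul (ztil γ₂) (Jz (n - 1) (h γ₁))) := by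
  refine forall₂_congr fun γ₁ γ₂ => ?_
  have := key α hα (n - 1) (h γ₁) (h γ₂) (ztil (γ₁ * γ₂)) (ztil γ₁) (ztil γ₂)
  simp only [RhoTilde, hh γ₁ γ₂]
  exact this

end
end

section
/- Let Γ be a group, h : Γ → ℤ a group homomorphism, α a nonzero complex number, n ≥ 2, and let z̃ = (z̃_1, …, z̃_{n−1}) : Γ → ℂ^{n−1} satisfy z̃(γ₁γ₂) = z̃(γ₁) + α^{h(γ₁)} z̃(γ₂) J_{n−1}^{h(γ₁)} for all γ₁, γ₂ ∈ Γ. Then for each 1 ≤ k ≤ n−1 and all γ₁, γ₂ ∈ Γ: z̃_k(γ₁γ₂) = z̃_k(γ₁) + α^{h(γ₁)} z̃_k(γ₂) + Σ_{i=1}^{k−1} h_i(γ₁) α^{h(γ₁)} z̃_{k−i}(γ₂); equivalently δz̃_k + Σ_{i=1}^{k−1} h_i ⌣ z̃_{k−i} = 0. In particular z̃_1(γ₁γ₂) = z̃_1(γ₁) + α^{h(γ₁)} z̃_1(γ₂), i.e. z̃_1 is a derivation with coefficients in ℂ_α. -/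
open Matrix

noncomputable section

lemma gbinom_zero (m : ℤ) : gbinom m 0 = 1 := by simp [gbinom]

lemma gbinom_zero_left (k : ℕ) : gbinom 0 (k+1) = 0 := by
  unfold gbinom
  rw [Finset.prod_eq_zero (Finset.mem_range.2 (Nat.succ_pos k)) (by simp)]
  simp

lemma gbinom_pascal (m : ℤ) (k : ℕ) :
    gbinom (m+1) (k+1) = gbinom m (k+1) + gbinom m k := by
  unfold gbinom
  have h1 : (∏ i ∈ Finset.range (k+1), (((m+1 : ℤ) : ℂ) - i))
      = ((m : ℂ) + 1) * ∏ i ∈ Finset.range k, ((m : ℂ) - i) := by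
    rw [Finset.prod_range_succ']
    rw [Finset.prod_congr rfl (fun i (_ : i ∈ Finset.range k) =>
      (by push_cast; ring : ((m+1 : ℤ) : ℂ) - ((i+1 : ℕ) : ℂ) = (m : ℂ) - i))]
    push_cast
    ring
  have h2 : (∏ i ∈ Finset.range (k+1), ((m : ℂ) - i))
      = (∏ i ∈ Finset.range k, ((m : ℂ) - i)) * ((m : ℂ) - k) :=
    Finset.prod_range_succ _ _
  rw [h1, h2, Nat.factorial_succ]
  have hk : (Nat.factorial k : ℂ) ≠ 0 := Nat.cast_ne_zero.2 (Nat.factorial_ne_zero k)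
  have hk1 : ((k : ℂ) + 1) ≠ 0 := by
    have : (0:ℝ) < k + 1 := by positivity
    intro hc
    have := congrArg Complex.re hc
    push_cast at this
    simp at this
    linarith
  push_cast
  field_simp
  ring


/-- Candidate formula for J^m. -/
def Mz (n : ℕ) (m : ℤ) : Matrix (Fin n) (Fin n) ℂ :=
  Matrix.of fun i j => if (i : ℕ) ≤ (j : ℕ) then gbinom m ((j : ℕ) - (i : ℕ)) else 0

lemma Mz_zero (n : ℕ) : Mz n 0 = 1 := by
  ext i j
  simp only [Mz, Matrix.of_apply, Matrix.one_apply]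
  rcases lt_trichotomy (i : ℕ) (j : ℕ) with hlt | heq | hgt
  · rw [if_pos hlt.le, if_neg (by intro hc; subst hc; exact lt_irrefl _ hlt)]
    obtain ⟨d, hd⟩ : ∃ d, (j : ℕ) - (i : ℕ) = d + 1 := ⟨(j:ℕ) - i - 1, by omega⟩
    rw [hd, gbinom_zero_left]
  · rw [if_pos heq.le, if_pos (Fin.ext heq), heq, Nat.sub_self, gbinom_zero]
  · rw [if_neg (by omega), if_neg (by intro hc; subst hc; exact lt_irrefl _ hgt)]

lemma mul_Nmat (n : ℕ) (A : Matrix (Fin n) (Fin n) ℂ) (i j : Fin n) :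
    (A * Nmat n) i j
      = if hj : 0 < (j : ℕ) then A i ⟨(j : ℕ) - 1, by omega⟩ else 0 := by
  rw [Matrix.mul_apply]
  by_cases hj : 0 < (j : ℕ)
  · rw [dif_pos hj]
    rw [Finset.sum_eq_single (⟨(j : ℕ) - 1, by omega⟩ : Fin n)]
    · simp only [Nmat, Matrix.of_apply]
      rw [if_pos (by omega)]
      ring
    · intro b _ hb
      simp only [Nmat, Matrix.of_apply]
      rw [if_neg (by intro hc; apply hb; apply Fin.ext; show (b:ℕ) = (j:ℕ)-1; omega)]
      ring
    · intro hc; exact absurd (Finset.mem_univ _) hc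
  · rw [dif_neg hj]
    apply Finset.sum_eq_zero
    intro b _
    simp only [Nmat, Matrix.of_apply]
    rw [if_neg (by omega)]
    ring

lemma Mz_mul_Jmat (n : ℕ) (m : ℤ) : Mz n m * Jmat n = Mz n (m+1) := by
  ext i j
  rw [Jmat, mul_add, mul_one, Matrix.add_apply, mul_Nmat]
  by_cases hj : 0 < (j : ℕ)
  · rw [dif_pos hj]
    simp only [Mz, Matrix.of_apply]
    rcases lt_trichotomy (i : ℕ) (j : ℕ) with hlt | heq | hgt
    · rw [if_pos hlt.le, if_pos (by omega), if_pos (by omega)]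
      obtain ⟨d, hd⟩ : ∃ d, (j : ℕ) - (i : ℕ) = d + 1 := ⟨(j:ℕ) - i - 1, by omega⟩
      rw [hd, (by omega : (j : ℕ) - 1 - (i : ℕ) = d), gbinom_pascal]
    · rw [if_pos heq.le, if_pos heq.le, if_neg (by omega), heq, Nat.sub_self,
        gbinom_zero, gbinom_zero, add_zero]
    · rw [if_neg (by omega), if_neg (by omega), if_neg (by omega), add_zero]
  · rw [dif_neg hj]
    simp only [Mz, Matrix.of_apply, add_zero]
    by_cases hij : (i : ℕ) ≤ (j : ℕ)
    · rw [if_pos hij, if_pos hij, (by omega : (j : ℕ) - (i : ℕ) = 0),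
        gbinom_zero, gbinom_zero]
    · rw [if_neg hij, if_neg hij]


lemma Jz_succ (n : ℕ) (m : ℤ) : Jz n (m+1) = Jz n m * Jmat n := by
  simp only [Jz]
  rw [_root_.zpow_add_one, Units.val_mul, IsUnit.unit_spec]

lemma Jz_eq_Mz (n : ℕ) (m : ℤ) : Jz n m = Mz n m := by
  induction m using Int.induction_on with
  | zero => simp [Jz, Mz_zero]
  | succ k ih =>
      have : Jz n ((k : ℤ)+1) = Jz n k * Jmat n := Jz_succ n k
      rw [this, ih, Mz_mul_Jmat]
  | pred k ih =>
      have h1 : Jz n (-(k:ℤ)) = Jz n (-(k:ℤ)-1) * Jmat n := by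
        rw [← Jz_succ]; norm_num
      have h2 : Mz n (-k) = Mz n (-k-1) * Jmat n := by
        rw [Mz_mul_Jmat]; norm_num
      have hJ : Jz n (-(k:ℤ)-1) * Jmat n = Mz n (-(k:ℤ)-1) * Jmat n := by
        rw [← h1, ← h2, ih]
      have hdet : IsUnit (Jmat n).det := Matrix.isUnit_iff_isUnit_det _ |>.1 (Jmat_isUnit n)
      have := congrArg (fun M => M * (Jmat n)⁻¹) hJ
      simpa [Matrix.mul_assoc, Matrix.mul_nonsing_inv _ hdet] using this

lemma vec_formula (N' : ℕ) (m : ℤ) (v : Fin N' → ℂ) (k : Fin N') :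
    Matrix.vecMul v (Jz N' m) k
      = v k + ∑ i ∈ Finset.range (k : ℕ),
          gbinom m (i+1) * v ⟨(k : ℕ) - (i+1),
            Nat.lt_of_le_of_lt (Nat.sub_le _ _) k.isLt⟩ := by
  rw [Jz_eq_Mz]
  have hstep1 : Matrix.vecMul v (Mz N' m) k = ∑ i : Fin N', v i * Mz N' m i k := by
    simp [Matrix.vecMul, dotProduct]
  set g : ℕ → ℂ := fun i =>
    if hi : i < N' then v ⟨i, hi⟩ * (if i ≤ (k : ℕ) then gbinom m ((k : ℕ) - i) else 0)
    else 0 with hg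
  have hstep2 : (∑ i : Fin N', v i * Mz N' m i k) = ∑ i ∈ Finset.range N', g i := by
    rw [← Fin.sum_univ_eq_sum_range]
    apply Finset.sum_congr rfl
    intro i _
    simp only [hg, Mz, Matrix.of_apply, dif_pos i.isLt]
  have hstep3 : (∑ i ∈ Finset.range N', g i) = ∑ i ∈ Finset.range ((k : ℕ)+1), g i := by
    symm
    apply Finset.sum_subset
    · intro x hx
      simp only [Finset.mem_range] at *
      omega
    · intro x hx hx'
      simp only [Finset.mem_range] at hx hx'
      simp only [hg, dif_pos hx, if_neg (by omega : ¬ x ≤ (k : ℕ)), mul_zero]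
  have hstep4 : (∑ i ∈ Finset.range ((k : ℕ)+1), g i)
      = ∑ j ∈ Finset.range ((k : ℕ)+1), g ((k : ℕ) - j) := by
    rw [← Finset.sum_range_reflect]
    apply Finset.sum_congr rfl
    intro j hj
    norm_num
  have hstep5 : ∀ j ∈ Finset.range ((k : ℕ)+1),
      g ((k : ℕ) - j) = gbinom m j * v ⟨(k : ℕ) - j,
        Nat.lt_of_le_of_lt (Nat.sub_le _ _) k.isLt⟩ := by
    intro j hj
    simp only [Finset.mem_range] at hj
    have hlt : (k : ℕ) - j < N' := Nat.lt_of_le_of_lt (Nat.sub_le _ _) k.isLt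
    simp only [hg, dif_pos hlt, if_pos (Nat.sub_le _ _)]
    rw [(by omega : (k : ℕ) - ((k : ℕ) - j) = j)]
    ring
  rw [hstep1, hstep2, hstep3, hstep4, Finset.sum_congr rfl hstep5,
    Finset.sum_range_succ']
  rw [gbinom_zero]
  have : (⟨(k : ℕ) - 0, Nat.lt_of_le_of_lt (Nat.sub_le _ _) k.isLt⟩ : Fin N') = k :=
    Fin.ext (show (k : ℕ) - 0 = (k : ℕ) by omega)
  rw [this, one_mul, add_comm]


/-- If `z̃ : Γ → ℂ^{n−1}` satisfies the vector cocycle condition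
`z̃(γ₁γ₂) = z̃(γ₁) + α^{h(γ₁)} z̃(γ₂) J^{h(γ₁)}`, then its components satisfy
`z̃_k(γ₁γ₂) = z̃_k(γ₁) + α^{h(γ₁)} z̃_k(γ₂) + Σ_{i=1}^{k−1} h_i(γ₁) α^{h(γ₁)} z̃_{k−i}(γ₂)`
(components indexed here by `k : Fin (n−1)`, so that index `k` stands for the
(k+1)-st component `z̃_{k+1}` of the paper); in particular the first component is a
derivation with coefficients in `ℂ_α`. -/
theorem stmt5 (Γ : Type*) [Group Γ] (h : Γ → ℤ)
    (hh : ∀ a b : Γ, h (a * b) = h a + h b)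
    (α : ℂ) (hα : α ≠ 0) (n : ℕ) (hn : 2 ≤ n) (ztil : Γ → Fin (n - 1) → ℂ)
    (hz : ∀ γ₁ γ₂ : Γ,
      ztil (γ₁ * γ₂)
        = ztil γ₁ + α ^ h γ₁ • Matrix.vecMul (ztil γ₂) (Jz (n - 1) (h γ₁))) :
    (∀ (k : Fin (n - 1)) (γ₁ γ₂ : Γ),
      ztil (γ₁ * γ₂) k
        = ztil γ₁ k + α ^ h γ₁ * ztil γ₂ k
          + ∑ i ∈ Finset.range (k : ℕ),
              gbinom (h γ₁) (i + 1)
                * (α ^ h γ₁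
                  * ztil γ₂ ⟨(k : ℕ) - (i + 1),
                      Nat.lt_of_le_of_lt (Nat.sub_le _ _) k.isLt⟩))
    ∧ (∀ γ₁ γ₂ : Γ,
        ztil (γ₁ * γ₂) ⟨0, by omega⟩
          = ztil γ₁ ⟨0, by omega⟩ + α ^ h γ₁ * ztil γ₂ ⟨0, by omega⟩) := by
  have key : ∀ (k : Fin (n - 1)) (γ₁ γ₂ : Γ),
      ztil (γ₁ * γ₂) k
        = ztil γ₁ k + α ^ h γ₁ * ztil γ₂ k
          + ∑ i ∈ Finset.range (k : ℕ),
              gbinom (h γ₁) (i + 1)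
                * (α ^ h γ₁
                  * ztil γ₂ ⟨(k : ℕ) - (i + 1),
                      Nat.lt_of_le_of_lt (Nat.sub_le _ _) k.isLt⟩) := by
    intro k γ₁ γ₂
    rw [hz γ₁ γ₂]
    simp only [Pi.add_apply, Pi.smul_apply, smul_eq_mul]
    rw [vec_formula, mul_add, Finset.mul_sum, ← add_assoc]
    congr 1
    exact Finset.sum_congr rfl (fun i _ => by ring)
  refine ⟨key, ?_⟩
  intro γ₁ γ₂
  have h0 : (0 : ℕ) < n - 1 := by omega
  have := key ⟨0, h0⟩ γ₁ γ₂
  simpa using this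

end
end

section
/- For every n ≥ 1, the matrix P_n satisfies P_n² = I_n (so P_n = P_n^{−1}), and P_n J_n P_n = J_n^{−1}, i.e. conjugation by P_n carries the unipotent Jordan block J_n to its inverse. -/
open Matrix

noncomputable section

/-- The matrix `P_n` with entries `(P_n)_{ij} = (−1)^j · binom(j,i)` (1-based indices,
here realized with 0-based indices `i, j : Fin n` as `(−1)^{j+1} · binom(j+1, i+1)`). -/
def Pmat (n : ℕ) : Matrix (Fin n) (Fin n) ℂ :=
  Matrix.of fun i j =>
    (-1 : ℂ) ^ ((j : ℕ) + 1) * (Nat.choose ((j : ℕ) + 1) ((i : ℕ) + 1) : ℂ)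

lemma key_s6 (I K M : ℕ) (hK : K < M) :
    ∑ j ∈ Finset.range M, (-1:ℂ)^j * (K.choose j) * (j.choose I) =
    (-1:ℂ)^I * (if I = K then 1 else 0) := by
  rcases le_or_gt I K with hIK | hIK
  · have h1 : ∑ j ∈ Finset.range M, (-1:ℂ)^j * (K.choose j) * (j.choose I)
        = ∑ j ∈ Finset.Ico I (K+1), (-1:ℂ)^j * (K.choose j) * (j.choose I) := by
      rw [Finset.range_eq_Ico]
      rw [← Finset.sum_subset (Finset.Ico_subset_Ico (Nat.zero_le _) hK)]
      intro j hj hj'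
      simp only [Finset.mem_Ico] at hj hj'
      rcases lt_or_ge j I with h | h
      · rw [Nat.choose_eq_zero_of_lt h]; ring
      · have : K < j := by omega
        rw [Nat.choose_eq_zero_of_lt this]; push_cast; ring
    rw [h1, Finset.sum_Ico_eq_sum_range]
    have h2 : ∀ t ∈ Finset.range (K + 1 - I),
        (-1:ℂ)^(I+t) * (K.choose (I+t)) * ((I+t).choose I)
        = (-1:ℂ)^I * (K.choose I) * ((-1:ℂ)^t * ((K-I).choose t)) := by
      intro t ht
      simp only [Finset.mem_range] at ht
      have hj : I + t ≤ K := by omega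
      have := Nat.choose_mul (n := K) (Nat.le_add_right I t)
      rw [Nat.add_sub_cancel_left] at this
      have hc : ((K.choose (I+t)) : ℂ) * ((I+t).choose I) = (K.choose I) * ((K-I).choose t) := by
        exact_mod_cast congrArg (Nat.cast : ℕ → ℂ) this
      rw [pow_add]
      linear_combination ((-1:ℂ)^I * (-1:ℂ)^t) * hc
    rw [Finset.sum_congr rfl h2, ← Finset.mul_sum]
    have h3 : K + 1 - I = (K - I) + 1 := by omega
    have h4 : ∑ t ∈ Finset.range ((K-I)+1), (-1:ℂ)^t * ((K-I).choose t)
        = if K - I = 0 then 1 else 0 := by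
      have := Int.alternating_sum_range_choose (n := K - I)
      have := congrArg (fun z : ℤ => (z : ℂ)) this
      push_cast at this
      simpa using this
    rw [h3, h4]
    rcases eq_or_lt_of_le hIK with h | h
    · subst h; simp
    · rw [if_neg (by omega), if_neg (by omega)]; ring
  · rw [Finset.sum_eq_zero, if_neg (by omega), mul_zero]
    intro j hj
    rcases le_or_gt j K with h | h
    · rw [Nat.choose_eq_zero_of_lt (by omega : j < I)]; ring
    · rw [Nat.choose_eq_zero_of_lt h]; push_cast; ring

lemma Pmat_mul_self (n : ℕ) : Pmat n * Pmat n = 1 := by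
  ext i k
  rw [Matrix.mul_apply, Matrix.one_apply]
  simp only [Pmat, Matrix.of_apply]
  rw [Fin.sum_univ_eq_sum_range (fun j =>
    (-1:ℂ)^(j+1) * ((j+1).choose ((i:ℕ)+1)) * ((-1:ℂ)^((k:ℕ)+1) * (((k:ℕ)+1).choose (j+1))))]
  have hsum : ∑ j ∈ Finset.range n,
      (-1:ℂ)^(j+1) * (((k:ℕ)+1).choose (j+1)) * ((j+1).choose ((i:ℕ)+1))
      = (-1:ℂ)^((i:ℕ)+1) * (if (i:ℕ)+1 = (k:ℕ)+1 then 1 else 0) := by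
    have h := key_s6 ((i:ℕ)+1) ((k:ℕ)+1) (n+1) (by omega)
    rw [Finset.sum_range_succ'] at h
    simpa using h
  calc ∑ j ∈ Finset.range n,
      (-1:ℂ)^(j+1) * ((j+1).choose ((i:ℕ)+1)) * ((-1:ℂ)^((k:ℕ)+1) * (((k:ℕ)+1).choose (j+1)))
      = (-1:ℂ)^((k:ℕ)+1) * ∑ j ∈ Finset.range n,
        (-1:ℂ)^(j+1) * (((k:ℕ)+1).choose (j+1)) * ((j+1).choose ((i:ℕ)+1)) := by
        rw [Finset.mul_sum]; exact Finset.sum_congr rfl fun j _ => by ring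
    _ = (-1:ℂ)^((k:ℕ)+1) * ((-1:ℂ)^((i:ℕ)+1) * (if (i:ℕ)+1 = (k:ℕ)+1 then 1 else 0)) := by
        rw [hsum]
    _ = if i = k then 1 else 0 := by
        by_cases h : i = k
        · subst h; simp [← pow_add]
        · rw [if_neg h, if_neg (by simpa [Fin.ext_iff] using h), mul_zero, mul_zero]

lemma PJ_apply (n : ℕ) (i j : Fin n) :
    (Pmat n * Jmat n) i j = (-1:ℂ)^((j:ℕ)+1) * (((j:ℕ)).choose (i:ℕ) : ℂ) := by
  rw [Matrix.mul_apply]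
  simp only [Jmat, Matrix.add_apply, Matrix.one_apply, Nmat, Matrix.of_apply, mul_add,
    mul_ite, mul_one, mul_zero]
  rw [Finset.sum_add_distrib]
  have h1 : ∑ x : Fin n, (if x = j then Pmat n i x else 0) = Pmat n i j := by simp
  obtain ⟨jv, hjv⟩ := j
  cases jv with
  | zero =>
    have h2 : ∑ x : Fin n,
        (if (x:ℕ)+1 = ((⟨0,hjv⟩ : Fin n) : ℕ) then Pmat n i x else 0) = 0 :=
      Finset.sum_eq_zero (by intro x _; simp)
    rw [h1, h2, add_zero]
    simp only [Pmat, Matrix.of_apply]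
    norm_num [Nat.choose_succ_succ]
  | succ m =>
    have hm : m < n := by omega
    have h2 : ∑ x : Fin n,
        (if (x:ℕ)+1 = ((⟨m+1,hjv⟩ : Fin n) : ℕ) then Pmat n i x else 0)
        = Pmat n i ⟨m, hm⟩ := by
      rw [Finset.sum_eq_single (⟨m, hm⟩ : Fin n)]
      · simp
      · intro b _ hb
        rw [if_neg]
        intro hc
        exact hb (Fin.ext (by simpa using hc))
      · simp
    rw [h1, h2]
    simp only [Pmat, Matrix.of_apply]
    have hP : ((Nat.choose (m+1+1) ((i:ℕ)+1)) : ℂ)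
        = (Nat.choose (m+1) (i:ℕ) : ℂ) + (Nat.choose (m+1) ((i:ℕ)+1) : ℂ) := by
      exact_mod_cast congrArg (Nat.cast : ℕ → ℂ) (Nat.choose_succ_succ (m+1) (i:ℕ))
    rw [hP]
    ring

lemma PJPJ (n : ℕ) : (Pmat n * Jmat n) * (Pmat n * Jmat n) = 1 := by
  ext i k
  rw [Matrix.mul_apply, Matrix.one_apply]
  simp only [PJ_apply]
  rw [Fin.sum_univ_eq_sum_range (fun j =>
    (-1:ℂ)^(j+1) * (j.choose (i:ℕ)) * ((-1:ℂ)^((k:ℕ)+1) * (((k:ℕ)).choose j)))]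
  have h := key_s6 (i:ℕ) (k:ℕ) n k.isLt
  calc ∑ j ∈ Finset.range n,
      (-1:ℂ)^(j+1) * (j.choose (i:ℕ)) * ((-1:ℂ)^((k:ℕ)+1) * (((k:ℕ)).choose j))
      = (-(-1:ℂ)^((k:ℕ)+1)) * ∑ j ∈ Finset.range n,
        (-1:ℂ)^j * (((k:ℕ)).choose j) * (j.choose (i:ℕ)) := by
        rw [Finset.mul_sum]
        exact Finset.sum_congr rfl fun j _ => by rw [pow_succ]; ring
    _ = (-(-1:ℂ)^((k:ℕ)+1)) * ((-1:ℂ)^(i:ℕ) * (if (i:ℕ) = (k:ℕ) then 1 else 0)) := by rw [h]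
    _ = if i = k then 1 else 0 := by
        by_cases hik : i = k
        · subst hik
          rw [if_pos rfl, if_pos rfl, mul_one]
          have hneg : -(-1:ℂ)^((i:ℕ)+1) = (-1:ℂ)^(i:ℕ) := by rw [pow_succ]; ring
          rw [hneg, ← pow_add]
          exact Even.neg_one_pow ⟨_, rfl⟩
        · rw [if_neg (by simpa [Fin.ext_iff] using hik), if_neg hik, mul_zero, mul_zero]

/-- `P_n² = I_n` (so `P_n = P_n^{−1}`) and `P_n J_n P_n = J_n^{−1}`. -/
theorem stmt6 (n : ℕ) (hn : 1 ≤ n) :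
    Pmat n * Pmat n = 1
    ∧ Pmat n = (Pmat n)⁻¹
    ∧ Pmat n * Jmat n * Pmat n = Jz n (-1) := by
  refine ⟨Pmat_mul_self n, (Matrix.inv_eq_right_inv (Pmat_mul_self n)).symm, ?_⟩
  have h : (Pmat n * Jmat n * Pmat n) * Jmat n = 1 := by
    rw [mul_assoc (Pmat n * Jmat n)]
    exact PJPJ n
  have h2 : Jz n (-1) = (Jmat n)⁻¹ := by
    have hz : (Jmat_isUnit n).unit ^ (-1:ℤ) = ((Jmat_isUnit n).unit)⁻¹ := zpow_neg_one _
    rw [Jz, hz, Matrix.coe_units_inv, IsUnit.unit_spec]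
  rw [h2]
  exact (Matrix.inv_eq_left_inv h).symm

end
end

section
/- Let Γ, h, α, n, z_1, …, z_{n−1} and ϱ be as specified, and let 0 ≤ i ≤ n−3. Then C(i) and C(i+1) are invariant under the adjoint action γ·X = ϱ(γ) X ϱ(γ)^{−1}, and the ℂ-linear map C(0) → C(i+1)/C(i) sending E_k^n to the class of E_k^{n−(i+1)} (for 1 ≤ k ≤ n) is a Γ-equivariant isomorphism, where Γ acts on C(0) by the adjoint action and on C(i+1)/C(i) by the induced quotient action. -/
open Matrix LaurentPolynomial

noncomputable section

/-- The representation ϱ : Γ → GL(n,ℂ), with `ϱ(γ)_{1,1} = α^{h(γ)}`,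
`ϱ(γ)_{1,j} = z_{j−1}(γ)` for `2 ≤ j ≤ n`, `ϱ(γ)_{i,1} = 0` for `2 ≤ i ≤ n`, and
`ϱ(γ)_{i,j} = (J_{n−1}^{h(γ)})_{i−1,j−1}` for `2 ≤ i, j ≤ n` (1-based indices). -/
def rhoMat (Γ : Type*) (α : ℂ) (n : ℕ) (h : Γ → ℤ) (z : Γ → ℕ → ℂ) (γ : Γ) :
    Matrix (Fin n) (Fin n) ℂ :=
  Matrix.of fun i j =>
    if hi : (i : ℕ) = 0 then
      (if (j : ℕ) = 0 then α ^ h γ else z γ (j : ℕ))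
    else
      (if hj : (j : ℕ) = 0 then 0
       else Jz (n - 1) (h γ) ⟨(i : ℕ) - 1, by have := i.isLt; omega⟩
              ⟨(j : ℕ) - 1, by have := j.isLt; omega⟩)

/-- The subspace `C(i)` of `gl(n,ℂ)` of matrices whose columns of 0-based index
`< n−1−i` vanish. -/
def Csub (n i : ℕ) : Submodule ℂ (Matrix (Fin n) (Fin n) ℂ) where
  carrier := {X | ∀ a b : Fin n, (b : ℕ) < n - 1 - i → X a b = 0}
  add_mem' := by
    intro X Y hX hY a b hb
    simp [Matrix.add_apply, hX a b hb, hY a b hb]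
  zero_mem' := by intro a b hb; rfl
  smul_mem' := by
    intro c X hX a b hb
    simp [Matrix.smul_apply, hX a b hb]

lemma stdBasisMatrix_mem_Csub (n k : ℕ) (i j : Fin n) (hj : n - 1 - k ≤ (j : ℕ)) :
    Matrix.single i j (1 : ℂ) ∈ Csub n k := by
  intro a b hb
  have hjb : j ≠ b := by
    intro hjb
    subst hjb
    omega
  simp [Matrix.single, Matrix.of_apply]
  intro _ hcontra
  exact absurd hcontra hjb

/-! ### Auxiliary lemmas -/

lemma diag_mul_bt {n : ℕ} {M N : Matrix (Fin n) (Fin n) ℂ}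
    (hM : M.BlockTriangular id) (hN : N.BlockTriangular id) (k : Fin n) :
    (M * N) k k = M k k * N k k := by
  rw [Matrix.mul_apply]
  apply Finset.sum_eq_single
  · intro j _ hjk
    rcases lt_or_gt_of_ne hjk with hj | hj
    · rw [hM (show id j < id k from hj), zero_mul]
    · rw [hN (show id k < id j from hj), mul_zero]
  · intro hk; exact absurd (Finset.mem_univ k) hk

def uniTri {n : ℕ} (M : Matrix (Fin n) (Fin n) ℂ) : Prop :=
  M.BlockTriangular id ∧ ∀ k, M k k = 1

lemma uniTri_one {n : ℕ} : uniTri (1 : Matrix (Fin n) (Fin n) ℂ) := by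
  constructor
  · intro a b hab
    exact Matrix.one_apply_ne (by intro hh; subst hh; exact lt_irrefl _ hab)
  · intro k; simp

lemma uniTri_mul {n : ℕ} {M N : Matrix (Fin n) (Fin n) ℂ}
    (hM : uniTri M) (hN : uniTri N) : uniTri (M * N) := by
  refine ⟨hM.1.mul hN.1, fun k => ?_⟩
  rw [diag_mul_bt hM.1 hN.1, hM.2, hN.2, one_mul]

lemma uniTri_det {n : ℕ} {M : Matrix (Fin n) (Fin n) ℂ} (hM : uniTri M) : M.det = 1 := by
  rw [Matrix.det_of_upperTriangular hM.1]
  simp [hM.2]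

lemma uniTri_inv {n : ℕ} {M : Matrix (Fin n) (Fin n) ℂ} (hM : uniTri M) : uniTri M⁻¹ := by
  have hdet : IsUnit M.det := by rw [uniTri_det hM]; exact isUnit_one
  haveI : Invertible M := M.invertibleOfIsUnitDet hdet
  have hbt : M⁻¹.BlockTriangular id := Matrix.blockTriangular_inv_of_blockTriangular hM.1
  refine ⟨hbt, fun k => ?_⟩
  have h1 : (M * M⁻¹) k k = 1 := by rw [Matrix.mul_nonsing_inv M hdet]; simp
  rw [diag_mul_bt hM.1 hbt, hM.2, one_mul] at h1
  exact h1

lemma uniTri_Jmat (n : ℕ) : uniTri (Jmat n) := by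
  refine ⟨Jmat_blockTriangular n, fun k => ?_⟩
  simp [Jmat, Matrix.one_apply, Nmat]

lemma uniTri_Jmat_pow (n k : ℕ) : uniTri (Jmat n ^ k) := by
  induction k with
  | zero => simpa using uniTri_one
  | succ k ih => rw [pow_succ]; exact uniTri_mul ih (uniTri_Jmat n)

lemma uniTri_Jz (n : ℕ) (m : ℤ) : uniTri (Jz n m) := by
  unfold Jz
  rcases m with k | k
  · rw [Int.ofNat_eq_coe, zpow_natCast, Units.val_pow_eq_pow_val, IsUnit.unit_spec]
    exact uniTri_Jmat_pow n k
  · rw [zpow_negSucc, ← inv_pow, Units.val_pow_eq_pow_val, Matrix.coe_units_inv,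
      IsUnit.unit_spec, Matrix.inv_pow']
    exact uniTri_inv (uniTri_Jmat_pow n (k + 1))

section Rho

variable {Γ : Type*} (α : ℂ) (n : ℕ) (h : Γ → ℤ) (z : Γ → ℕ → ℂ) (γ : Γ)

lemma rho_bt : (rhoMat Γ α n h z γ).BlockTriangular id := by
  intro a b hab
  have hba : (b : ℕ) < (a : ℕ) := hab
  unfold rhoMat
  simp only [Matrix.of_apply]
  rw [dif_neg (by omega)]
  by_cases hb : (b : ℕ) = 0
  · rw [dif_pos hb]
  · rw [dif_neg hb]
    exact (uniTri_Jz (n - 1) (h γ)).1 (show (⟨(b:ℕ)-1, _⟩ : Fin (n-1)) < ⟨(a:ℕ)-1, _⟩ from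
      Fin.mk_lt_mk.2 (by omega))

lemma rho_diag_pos (k : Fin n) (hk : 0 < (k : ℕ)) : rhoMat Γ α n h z γ k k = 1 := by
  unfold rhoMat
  simp only [Matrix.of_apply]
  rw [dif_neg (by omega), dif_neg (by omega)]
  exact (uniTri_Jz (n - 1) (h γ)).2 _

lemma rho_det_isUnit (hα : α ≠ 0) : IsUnit (rhoMat Γ α n h z γ).det := by
  rw [Matrix.det_of_upperTriangular (rho_bt α n h z γ), isUnit_iff_ne_zero]
  rw [Finset.prod_ne_zero_iff]
  intro k _
  by_cases hk : (k : ℕ) = 0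
  · unfold rhoMat
    simp only [Matrix.of_apply]
    rw [dif_pos hk, if_pos hk]
    exact zpow_ne_zero _ hα
  · rw [rho_diag_pos α n h z γ k (by omega)]
    exact one_ne_zero

lemma rho_inv_bt (hα : α ≠ 0) : (rhoMat Γ α n h z γ)⁻¹.BlockTriangular id := by
  haveI := (rhoMat Γ α n h z γ).invertibleOfIsUnitDet (rho_det_isUnit α n h z γ hα)
  exact Matrix.blockTriangular_inv_of_blockTriangular (rho_bt α n h z γ)

lemma rho_inv_diag_pos (hα : α ≠ 0) (k : Fin n) (hk : 0 < (k : ℕ)) :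
    (rhoMat Γ α n h z γ)⁻¹ k k = 1 := by
  have h1 : (rhoMat Γ α n h z γ * (rhoMat Γ α n h z γ)⁻¹) k k = 1 := by
    rw [Matrix.mul_nonsing_inv _ (rho_det_isUnit α n h z γ hα)]; simp
  rw [diag_mul_bt (rho_bt α n h z γ) (rho_inv_bt α n h z γ hα),
    rho_diag_pos α n h z γ k hk, one_mul] at h1
  exact h1

lemma adj_mem (hα : α ≠ 0) (c : ℕ) (X : Matrix (Fin n) (Fin n) ℂ) (hX : X ∈ Csub n c) :
    rhoMat Γ α n h z γ * X * (rhoMat Γ α n h z γ)⁻¹ ∈ Csub n c := by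
  intro a b hb
  rw [Matrix.mul_apply]
  apply Finset.sum_eq_zero
  intro l _
  by_cases hl : (l : ℕ) ≤ (b : ℕ)
  · have hzero : (rhoMat Γ α n h z γ * X) a l = 0 := by
      rw [Matrix.mul_apply]
      apply Finset.sum_eq_zero
      intro j _
      rw [hX j l (by omega), mul_zero]
    rw [hzero, zero_mul]
  · rw [rho_inv_bt α n h z γ hα (show id b < id l from by
      simp only [id_eq]; exact Fin.lt_def.2 (by omega)), mul_zero]

/-- The key column computation: if `X` is supported on the last column, `Y ∈ C(i+1)`, and
the `(n−2−i)`-th column of `Y` agrees with the last column of `X`, then the last column of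
`γ·X` agrees with the `(n−2−i)`-th column of `γ·Y`. -/
lemma key_col (hα : α ≠ 0) (i : ℕ) (hni : i + 3 ≤ n)
    (Xv Yv : Matrix (Fin n) (Fin n) ℂ) (hX0 : Xv ∈ Csub n 0) (hY1 : Yv ∈ Csub n (i + 1))
    (hcol : ∀ a : Fin n, Yv a ⟨n - 2 - i, lt_of_le_of_lt (Nat.sub_le (n - 2) i) (by omega)⟩ = Xv a ⟨n - 1, by omega⟩) (a : Fin n) :
    (rhoMat Γ α n h z γ * Xv * (rhoMat Γ α n h z γ)⁻¹) a ⟨n - 1, by omega⟩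
      = (rhoMat Γ α n h z γ * Yv * (rhoMat Γ α n h z γ)⁻¹) a ⟨n - 2 - i, lt_of_le_of_lt (Nat.sub_le (n - 2) i) (by omega)⟩ := by
  set ρ := rhoMat Γ α n h z γ with hρ
  have lhs : (ρ * Xv * ρ⁻¹) a ⟨n - 1, by omega⟩ = (ρ * Xv) a ⟨n - 1, by omega⟩ := by
    rw [Matrix.mul_apply]
    rw [Finset.sum_eq_single (⟨n - 1, by omega⟩ : Fin n)]
    · rw [rho_inv_diag_pos α n h z γ hα _ (by simp; omega), mul_one]
    · intro l _ hl
      have hl' : (l : ℕ) < n - 1 := by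
        have h1 := l.isLt
        have h2 : (l : ℕ) ≠ n - 1 := fun hc => hl (Fin.ext hc)
        omega
      have hz0 : (ρ * Xv) a l = 0 := by
        rw [Matrix.mul_apply]
        apply Finset.sum_eq_zero
        intro j _
        rw [hX0 j l (by omega), mul_zero]
      rw [hz0, zero_mul]
    · intro hc; exact absurd (Finset.mem_univ _) hc
  have rhs : (ρ * Yv * ρ⁻¹) a ⟨n - 2 - i, lt_of_le_of_lt (Nat.sub_le (n - 2) i) (by omega)⟩ = (ρ * Yv) a ⟨n - 2 - i, lt_of_le_of_lt (Nat.sub_le (n - 2) i) (by omega)⟩ := by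
    rw [Matrix.mul_apply]
    rw [Finset.sum_eq_single (⟨n - 2 - i, lt_of_le_of_lt (Nat.sub_le (n - 2) i) (by omega)⟩ : Fin n)]
    · rw [rho_inv_diag_pos α n h z γ hα _ (by simp; omega), mul_one]
    · intro l _ hl
      have hl2 : (l : ℕ) ≠ n - 2 - i := fun hc => hl (Fin.ext hc)
      rcases lt_or_gt_of_ne hl2 with hlt | hgt
      · have hz0 : (ρ * Yv) a l = 0 := by
          rw [Matrix.mul_apply]
          apply Finset.sum_eq_zero
          intro j _
          rw [hY1 j l (by omega), mul_zero]
        rw [hz0, zero_mul]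
      · rw [rho_inv_bt α n h z γ hα (show id (⟨n - 2 - i, lt_of_le_of_lt (Nat.sub_le (n - 2) i) (by omega)⟩ : Fin n) < id l from
          Fin.lt_def.2 (by simpa using hgt)), mul_zero]
    · intro hc; exact absurd (Finset.mem_univ _) hc
  rw [lhs, rhs, Matrix.mul_apply, Matrix.mul_apply]
  exact Finset.sum_congr rfl fun j _ => by rw [hcol j]

end Rho

/-- Linear map moving column `c` to column `d`, zeroing everything else. -/
def colMap (n : ℕ) (c d : Fin n) : Matrix (Fin n) (Fin n) ℂ →ₗ[ℂ] Matrix (Fin n) (Fin n) ℂ where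
  toFun X := Matrix.of fun a b => if b = d then X a c else 0
  map_add' X Y := by
    ext a b
    simp only [Matrix.of_apply, Matrix.add_apply]
    split <;> simp
  map_smul' t X := by
    ext a b
    simp only [Matrix.of_apply, Matrix.smul_apply, RingHom.id_apply, smul_eq_mul]
    split <;> simp

lemma colMap_apply (n : ℕ) (c d : Fin n) (X : Matrix (Fin n) (Fin n) ℂ) (a b : Fin n) :
    colMap n c d X a b = if b = d then X a c else 0 := rfl

lemma colMap_mem (n : ℕ) (c d : Fin n) (k : ℕ) (hd : n - 1 - k ≤ (d : ℕ))
    (X : Matrix (Fin n) (Fin n) ℂ) : colMap n c d X ∈ Csub n k := by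
  intro a b hb
  rw [colMap_apply, if_neg]
  intro hc; subst hc; omega


section Equiv

variable (n i : ℕ) (hi : i + 3 ≤ n)

def clF : Fin n := ⟨n - 1, by omega⟩
def c2F : Fin n := ⟨n - 2 - i, lt_of_le_of_lt (Nat.sub_le (n - 2) i) (by omega)⟩

abbrev psub : Submodule ℂ (Csub n (i + 1)) := (Csub n i).comap (Csub n (i + 1)).subtype

def phi0 : (Csub n 0) →ₗ[ℂ] (Csub n (i + 1)) :=
  LinearMap.codRestrict (Csub n (i + 1))
    ((colMap n (clF n i hi) (c2F n i hi)).comp (Csub n 0).subtype)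
    (fun X => colMap_mem n _ _ (i + 1) (by simp [c2F]; omega) X.1)

def phiQ : (Csub n 0) →ₗ[ℂ] (Csub n (i + 1) ⧸ psub n i) :=
  (psub n i).mkQ.comp (phi0 n i hi)

def psi0 : (Csub n (i + 1)) →ₗ[ℂ] (Csub n 0) :=
  LinearMap.codRestrict (Csub n 0)
    ((colMap n (c2F n i hi) (clF n i hi)).comp (Csub n (i + 1)).subtype)
    (fun Y => colMap_mem n _ _ 0 (by simp [clF]) Y.1)

lemma psi0_ker : psub n i ≤ LinearMap.ker (psi0 n i hi) := by
  intro Y hY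
  rw [LinearMap.mem_ker]
  apply Subtype.ext
  ext a b
  show (if b = clF n i hi then Y.1 a (c2F n i hi) else 0) = 0
  have hY' : (Y : Matrix (Fin n) (Fin n) ℂ) ∈ Csub n i := hY
  rw [hY' a (c2F n i hi) (by simp [c2F]; omega)]
  split <;> rfl

def psiQ : (Csub n (i + 1) ⧸ psub n i) →ₗ[ℂ] (Csub n 0) :=
  (psub n i).liftQ (psi0 n i hi) (psi0_ker n i hi)

lemma comp2 : (psiQ n i hi).comp (phiQ n i hi) = LinearMap.id := by
  apply LinearMap.ext
  intro X
  apply Subtype.ext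
  ext a b
  show (if b = clF n i hi then (if c2F n i hi = c2F n i hi then X.1 a (clF n i hi) else 0)
    else 0) = X.1 a b
  rw [if_pos rfl]
  by_cases hb : b = clF n i hi
  · subst hb; rw [if_pos rfl]
  · rw [if_neg hb, X.2 a b (by
      have h1 := b.isLt
      have h3 : (b : ℕ) ≠ n - 1 := fun hc => hb (Fin.ext hc)
      omega)]

lemma comp1 : (phiQ n i hi).comp (psiQ n i hi) = LinearMap.id := by
  apply Submodule.linearMap_qext
  apply LinearMap.ext
  intro Y
  simp only [LinearMap.comp_apply, Submodule.mkQ_apply, psiQ, Submodule.liftQ_apply,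
    LinearMap.id_apply, phiQ]
  rw [Submodule.Quotient.eq]
  intro a b hb
  show ((if b = c2F n i hi then (if clF n i hi = clF n i hi then Y.1 a (c2F n i hi) else 0)
    else 0) : ℂ) - Y.1 a b = 0
  rw [if_pos rfl]
  by_cases hbc : b = c2F n i hi
  · subst hbc; rw [if_pos rfl, sub_self]
  · rw [if_neg hbc, Y.2 a b (by
      have h3 : (b : ℕ) ≠ n - 2 - i := fun hc => hbc (Fin.ext (by simpa [c2F] using hc))
      omega), sub_zero]

def eIso : (Csub n 0) ≃ₗ[ℂ] (Csub n (i + 1) ⧸ psub n i) :=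
  LinearEquiv.ofLinear (phiQ n i hi) (psiQ n i hi) (comp1 n i hi) (comp2 n i hi)

lemma eIso_apply (X : Csub n 0) :
    eIso n i hi X = Submodule.Quotient.mk (phi0 n i hi X) := rfl

end Equiv

set_option maxHeartbeats 1000000 in
/-- For `0 ≤ i ≤ n−3`, the subspaces `C(i)` and `C(i+1)` are invariant under the
adjoint action `γ·X = ϱ(γ) X ϱ(γ)⁻¹`, and the ℂ-linear map `C(0) → C(i+1)/C(i)`
sending `E_kⁿ` to the class of `E_k^{n−(i+1)}` (for `1 ≤ k ≤ n`) is a Γ-equivariant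
isomorphism. -/
theorem stmt11 (Γ : Type*) [Group Γ] (h : Γ → ℤ)
    (hh : ∀ a b : Γ, h (a * b) = h a + h b)
    (α : ℂ) (hα : α ≠ 0) (n : ℕ) (hn : 2 ≤ n) (z : Γ → ℕ → ℂ)
    (hz : ∀ k : ℕ, 1 ≤ k → k ≤ n - 1 → ∀ γ₁ γ₂ : Γ,
      z (γ₁ * γ₂) k = z γ₁ k + α ^ h γ₁ * z γ₂ k
        + ∑ i ∈ Finset.Icc 1 (k - 1), z γ₁ i * gbinom (h γ₂) (k - i))
    (i : ℕ) (hi : i + 3 ≤ n) :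
    (∀ γ : Γ, ∀ X ∈ Csub n i,
        rhoMat Γ α n h z γ * X * (rhoMat Γ α n h z γ)⁻¹ ∈ Csub n i)
    ∧ (∀ γ : Γ, ∀ X ∈ Csub n (i + 1),
        rhoMat Γ α n h z γ * X * (rhoMat Γ α n h z γ)⁻¹ ∈ Csub n (i + 1))
    ∧ ∃ e : (Csub n 0) ≃ₗ[ℂ]
        (Csub n (i + 1) ⧸ (Csub n i).comap (Csub n (i + 1)).subtype),
      (∀ k : Fin n,
        e ⟨Matrix.single k (⟨n - 1, by omega⟩ : Fin n) (1 : ℂ),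
            stdBasisMatrix_mem_Csub n 0 _ _ (le_refl _)⟩
          = Submodule.Quotient.mk
              ⟨Matrix.single k (⟨n - 2 - i, by omega⟩ : Fin n) (1 : ℂ),
                stdBasisMatrix_mem_Csub n (i + 1) _ _ ((by omega : n - 1 - (i + 1) ≤ n - 2 - i))⟩)
      ∧ (∀ (γ : Γ) (X : Csub n 0)
            (hX : rhoMat Γ α n h z γ * (X : Matrix (Fin n) (Fin n) ℂ)
                * (rhoMat Γ α n h z γ)⁻¹ ∈ Csub n 0)
            (Y : Csub n (i + 1)),
          e X = Submodule.Quotient.mk Y →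
          ∀ hY : rhoMat Γ α n h z γ * (Y : Matrix (Fin n) (Fin n) ℂ)
              * (rhoMat Γ α n h z γ)⁻¹ ∈ Csub n (i + 1),
            e ⟨_, hX⟩ = Submodule.Quotient.mk ⟨_, hY⟩) := by
  refine ⟨fun γ X hX => adj_mem α n h z γ hα i X hX,
    fun γ X hX => adj_mem α n h z γ hα (i + 1) X hX, eIso n i hi, ?_, ?_⟩
  · intro k
    rw [eIso_apply]
    congr 1
    apply Subtype.ext
    ext a b
    show (if b = c2F n i hi then Matrix.single k (clF n i hi) 1 a (clF n i hi) else 0)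
      = Matrix.single k (⟨n - 2 - i, by omega⟩ : Fin n) 1 a b
    by_cases hbc : b = c2F n i hi
    · subst hbc
      rw [if_pos rfl]
      simp [Matrix.single, c2F, clF]
    · rw [if_neg hbc]
      simp only [Matrix.single, Matrix.of_apply]
      rw [if_neg (by intro hc; exact hbc (by simpa [c2F] using hc.2.symm))]
  · intro γ X hX Y hEq hY
    rw [eIso_apply] at hEq ⊢
    rw [Submodule.Quotient.eq] at hEq ⊢
    have hcol : ∀ a : Fin n, Y.1 a ⟨n - 2 - i, by omega⟩ = X.1 a ⟨n - 1, by omega⟩ := by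
      intro a
      have h3 : ((if c2F n i hi = c2F n i hi then X.1 a (clF n i hi) else 0) : ℂ)
          - Y.1 a (c2F n i hi) = 0 := hEq a (c2F n i hi) (by simp [c2F]; omega)
      rw [if_pos rfl] at h3
      exact (sub_eq_zero.mp h3).symm
    intro a b hb
    show ((if b = c2F n i hi
        then (rhoMat Γ α n h z γ * X.1 * (rhoMat Γ α n h z γ)⁻¹) a (clF n i hi) else 0) : ℂ)
      - (rhoMat Γ α n h z γ * Y.1 * (rhoMat Γ α n h z γ)⁻¹) a b = 0
    by_cases hbc : b = c2F n i hi
    · subst hbc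
      rw [if_pos rfl]
      rw [show (clF n i hi) = (⟨n - 1, by omega⟩ : Fin n) from rfl,
        show (c2F n i hi) = (⟨n - 2 - i, by omega⟩ : Fin n) from rfl,
        key_col α n h z γ hα i hi X.1 Y.1 X.2 Y.2 hcol a, sub_self]
    · rw [if_neg hbc, hY a b (by
        have h3 : (b : ℕ) ≠ n - 2 - i := fun hc => hbc (Fin.ext (by simpa [c2F] using hc))
        omega), sub_zero]

end
end

section
/- Let n ≥ 2, let λ be a nonzero complex number with α := λ^n ≠ 1, and let A : ℂ → SL(n,ℂ) be a map, analytic in a neighborhood of 0, with A(0) = λ^{−1}·diag(α, J_{n−1}) (the block-diagonal matrix with (1,1)-entry α and lower-right block J_{n−1}, scaled by λ^{−1}). Then there exist ε > 0 and an analytic map C : {t ∈ ℂ : |t| < ε} → SL(n,ℂ) with C(0) = I_n such that for all |t| < ε the matrix C(t) A(t) C(t)^{−1} satisfies (C(t) A(t) C(t)^{−1})_{i,1} = 0 and (C(t) A(t) C(t)^{−1})_{1,j} = 0 for all 2 ≤ i, j ≤ n. -/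
open Matrix

noncomputable section

lemma analyticAt_det' {ι : Type*} [Fintype ι] [DecidableEq ι]
    (M : ℂ → Matrix ι ι ℂ) (t : ℂ) (h : ∀ i j, AnalyticAt ℂ (fun s => M s i j) t) :
    AnalyticAt ℂ (fun s => (M s).det) t := by
  simp_rw [Matrix.det_apply']
  exact Finset.analyticAt_fun_sum _ fun σ _ =>
    analyticAt_const.mul (Finset.analyticAt_fun_prod _ fun i _ => h (σ i) i)

lemma analyticAt_inv_entry {ι : Type*} [Fintype ι] [DecidableEq ι]
    (M : ℂ → Matrix ι ι ℂ) (t : ℂ) (h : ∀ i j, AnalyticAt ℂ (fun s => M s i j) t)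
    (hdet : (M t).det ≠ 0) (i j : ι) :
    AnalyticAt ℂ (fun s => (M s)⁻¹ i j) t := by
  simp_rw [Matrix.inv_def, Matrix.smul_apply, Matrix.adjugate_apply, Ring.inverse_eq_inv',
    smul_eq_mul]
  refine ((analyticAt_det' M t h).inv hdet).mul (analyticAt_det' _ t fun i' j' => ?_)
  simp_rw [Matrix.updateRow_apply]
  by_cases hij : i' = j
  · simp only [hij, if_pos rfl]; exact analyticAt_const
  · simpa [hij] using h i' j'

abbrev VV (m : ℕ) := (Fin m → ℂ) × (Fin m → ℂ)
abbrev EE (m : ℕ) := ℂ × VV m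

def Fmap {m : ℕ} (A : ℂ → Matrix (Fin 1 ⊕ Fin m) (Fin 1 ⊕ Fin m) ℂ) (p : EE m) : VV m :=
  (fun i => A p.1 (Sum.inr i) (Sum.inl 0) + (∑ j, A p.1 (Sum.inr i) (Sum.inr j) * p.2.1 j)
      - p.2.1 i * (A p.1 (Sum.inl 0) (Sum.inl 0) + ∑ j, A p.1 (Sum.inl 0) (Sum.inr j) * p.2.1 j),
   fun j => A p.1 (Sum.inl 0) (Sum.inl 0) * p.2.2 j + A p.1 (Sum.inl 0) (Sum.inr j)
      - ∑ i, p.2.2 i * (A p.1 (Sum.inr i) (Sum.inl 0) * p.2.2 j + A p.1 (Sum.inr i) (Sum.inr j)))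

def Gmap {m : ℕ} (A : ℂ → Matrix (Fin 1 ⊕ Fin m) (Fin 1 ⊕ Fin m) ℂ) (p : EE m) : EE m :=
  (p.1, Fmap A p)

def Smat {m : ℕ} (x y : ℂ → Fin m → ℂ) (t : ℂ) : Matrix (Fin 1 ⊕ Fin m) (Fin 1 ⊕ Fin m) ℂ :=
  fromBlocks 1 (of fun _ j => y t j) (of fun i _ => x t i) 1

def Bmat {m : ℕ} (A : ℂ → Matrix (Fin 1 ⊕ Fin m) (Fin 1 ⊕ Fin m) ℂ) (x y : ℂ → Fin m → ℂ)
    (t : ℂ) : Matrix (Fin 1 ⊕ Fin m) (Fin 1 ⊕ Fin m) ℂ :=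
  fromBlocks (of fun _ _ => A t (Sum.inl 0) (Sum.inl 0) + ∑ j, A t (Sum.inl 0) (Sum.inr j) * x t j)
    0 0 (of fun i j => A t (Sum.inr i) (Sum.inl 0) * y t j + A t (Sum.inr i) (Sum.inr j))

lemma AS_eq {m : ℕ} (A : ℂ → Matrix (Fin 1 ⊕ Fin m) (Fin 1 ⊕ Fin m) ℂ) (x y : ℂ → Fin m → ℂ)
    (t : ℂ) (hF : Fmap A (t, (x t, y t)) = 0) :
    A t * Smat x y t = Smat x y t * Bmat A x y t := by
  have h1 : ∀ i, (Fmap A (t, (x t, y t))).1 i = 0 := fun i => congrFun (congrArg Prod.fst hF) i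
  have h2 : ∀ j, (Fmap A (t, (x t, y t))).2 j = 0 := fun j => congrFun (congrArg Prod.snd hF) j
  simp only [Fmap] at h1 h2
  ext i j
  cases i with
  | inl i =>
    obtain rfl : i = 0 := Fin.fin_one_eq_zero i
    cases j with
    | inl j =>
      obtain rfl : j = 0 := Fin.fin_one_eq_zero j
      simp [Matrix.mul_apply, Fintype.sum_sum_type, Smat, Bmat, Matrix.one_apply]
    | inr j =>
      have := h2 j
      simp [Matrix.mul_apply, Fintype.sum_sum_type, Smat, Bmat, Matrix.one_apply]
      linear_combination this
  | inr i =>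
    cases j with
    | inl j =>
      obtain rfl : j = 0 := Fin.fin_one_eq_zero j
      have := h1 i
      simp [Matrix.mul_apply, Fintype.sum_sum_type, Smat, Bmat, Matrix.one_apply]
      linear_combination this
    | inr j =>
      simp [Matrix.mul_apply, Fintype.sum_sum_type, Smat, Bmat, Matrix.one_apply]
section X
variable {m : ℕ} (A : ℂ → Matrix (Fin 1 ⊕ Fin m) (Fin 1 ⊕ Fin m) ℂ) (x y : ℂ → Fin m → ℂ)

def Smat' (t : ℂ) : Matrix (Fin 1 ⊕ Fin m) (Fin 1 ⊕ Fin m) ℂ :=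
  fromBlocks 1 (of fun _ j => y t j) (of fun i _ => x t i) 1

def Kmat (t : ℂ) : Matrix (Fin 1 ⊕ Fin m) (Fin 1 ⊕ Fin m) ℂ :=
  fromBlocks (of fun _ _ => (Smat' x y t).det) 0 0 1

def Cmat (t : ℂ) : Matrix (Fin 1 ⊕ Fin m) (Fin 1 ⊕ Fin m) ℂ :=
  Kmat x y t * (Smat' x y t)⁻¹

lemma Kmat_inv (t : ℂ) (hd : (Smat' x y t).det ≠ 0) :
    (Kmat x y t)⁻¹ = fromBlocks (of fun _ _ => ((Smat' x y t).det)⁻¹) 0 0 1 := by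
  apply Matrix.inv_eq_right_inv
  rw [Kmat, Matrix.fromBlocks_multiply]
  rw [show ((of fun _ _ => (Smat' x y t).det) : Matrix (Fin 1) (Fin 1) ℂ) *
      (of fun _ _ => ((Smat' x y t).det)⁻¹) = 1 by
    ext i j; simp [Matrix.mul_apply, Matrix.one_apply, mul_inv_cancel₀ hd,
      Subsingleton.elim i j]]
  simp [Matrix.fromBlocks_one]

lemma Cmat_det (t : ℂ) (hd : (Smat' x y t).det ≠ 0) : (Cmat x y t).det = 1 := by
  rw [Cmat, Matrix.det_mul, Matrix.det_nonsing_inv, Kmat, Matrix.det_fromBlocks_zero₂₁,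
    Ring.inverse_eq_inv']
  simp [Matrix.det_fin_one, mul_inv_cancel₀ hd]

lemma Cmat_conj (t : ℂ) (hd : (Smat' x y t).det ≠ 0) (B : Matrix (Fin 1 ⊕ Fin m) (Fin 1 ⊕ Fin m) ℂ)
    (P : Matrix (Fin 1) (Fin 1) ℂ) (Q : Matrix (Fin m) (Fin m) ℂ)
    (hB : B = fromBlocks P 0 0 Q)
    (hAS : A t * Smat' x y t = Smat' x y t * B) :
    Cmat x y t * A t * (Cmat x y t)⁻¹ =
      fromBlocks ((of fun _ _ => (Smat' x y t).det) * P * (of fun _ _ => ((Smat' x y t).det)⁻¹))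
        0 0 Q := by
  have hCinv : (Cmat x y t)⁻¹ = Smat' x y t * (Kmat x y t)⁻¹ := by
    rw [Cmat, Matrix.mul_inv_rev, Matrix.nonsing_inv_nonsing_inv _ (isUnit_iff_ne_zero.2 hd)]
  rw [hCinv, Cmat, Kmat_inv _ _ _ hd]
  have : Kmat x y t * (Smat' x y t)⁻¹ * A t * (Smat' x y t *
      fromBlocks (of fun _ _ => ((Smat' x y t).det)⁻¹) 0 0 1) =
      Kmat x y t * ((Smat' x y t)⁻¹ * (A t * Smat' x y t)) *
      fromBlocks (of fun _ _ => ((Smat' x y t).det)⁻¹) 0 0 1 := by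
    noncomm_ring
  rw [this, hAS, ← Matrix.mul_assoc ((Smat' x y t)⁻¹), Matrix.nonsing_inv_mul _
    (isUnit_iff_ne_zero.2 hd), Matrix.one_mul, hB, Kmat, Matrix.fromBlocks_multiply,
    Matrix.fromBlocks_multiply]
  simp [Matrix.fromBlocks]

end X
section Y
variable {m : ℕ} (A : ℂ → Matrix (Fin 1 ⊕ Fin m) (Fin 1 ⊕ Fin m) ℂ) (x y : ℂ → Fin m → ℂ)

lemma Smat'_zero (hx : x 0 = 0) (hy : y 0 = 0) : Smat' x y 0 = 1 := by
  rw [Smat', show (of fun _ j => y 0 j : Matrix (Fin 1) (Fin m) ℂ) = 0 by ext i j; simp [hy],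
    show (of fun i _ => x 0 i : Matrix (Fin m) (Fin 1) ℂ) = 0 by ext i j; simp [hx],
    Matrix.fromBlocks_one]

lemma Cmat_zero (hx : x 0 = 0) (hy : y 0 = 0) : Cmat x y 0 = 1 := by
  rw [Cmat, Kmat, Smat'_zero x y hx hy, Matrix.det_one, show (1 : Matrix (Fin 1 ⊕ Fin m) (Fin 1 ⊕ Fin m) ℂ)⁻¹ = 1 from Matrix.inv_eq_right_inv (one_mul 1),
    show (of fun _ _ => (1:ℂ) : Matrix (Fin 1) (Fin 1) ℂ) = 1 by
      ext i j; simp [Matrix.one_apply, Subsingleton.elim i j],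
    Matrix.fromBlocks_one, Matrix.mul_one]

lemma Smat'_analytic (t : ℂ) (hx : ∀ i, AnalyticAt ℂ (fun s => x s i) t)
    (hy : ∀ i, AnalyticAt ℂ (fun s => y s i) t) (i j : Fin 1 ⊕ Fin m) :
    AnalyticAt ℂ (fun s => Smat' x y s i j) t := by
  cases i with
  | inl i => cases j with
    | inl j => exact analyticAt_const
    | inr j => exact hy j
  | inr i => cases j with
    | inl j => exact hx i
    | inr j => exact analyticAt_const

lemma Cmat_analytic (t : ℂ) (hx : ∀ i, AnalyticAt ℂ (fun s => x s i) t)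
    (hy : ∀ i, AnalyticAt ℂ (fun s => y s i) t) (hd : (Smat' x y t).det ≠ 0)
    (i j : Fin 1 ⊕ Fin m) : AnalyticAt ℂ (fun s => Cmat x y s i j) t := by
  have hS := Smat'_analytic x y t hx hy
  have hdet : AnalyticAt ℂ (fun s => (Smat' x y s).det) t := analyticAt_det' _ t hS
  have hK : ∀ i j, AnalyticAt ℂ (fun s => Kmat x y s i j) t := by
    intro i j
    cases i with
    | inl i => cases j with
      | inl j => exact hdet
      | inr j => exact analyticAt_const
    | inr i => cases j with
      | inl j => exact analyticAt_const
      | inr j => exact analyticAt_const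
  simp only [Cmat, Matrix.mul_apply]
  exact Finset.analyticAt_fun_sum _ fun k _ => (hK i k).mul (analyticAt_inv_entry _ t hS hd k j)

lemma Gmap_analytic (hA : ∀ i j, AnalyticAt ℂ (fun t => A t i j) 0) :
    AnalyticAt ℂ (Gmap A) 0 := by
  have hfst : AnalyticAt ℂ (fun p : EE m => p.1) 0 :=
    (ContinuousLinearMap.fst ℂ ℂ (VV m)).analyticAt 0
  have hx : ∀ i, AnalyticAt ℂ (fun p : EE m => p.2.1 i) 0 := fun i =>
    ((ContinuousLinearMap.proj i).comp ((ContinuousLinearMap.fst ℂ (Fin m → ℂ) (Fin m → ℂ)).comp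
      (ContinuousLinearMap.snd ℂ ℂ (VV m)))).analyticAt 0
  have hy : ∀ i, AnalyticAt ℂ (fun p : EE m => p.2.2 i) 0 := fun i =>
    ((ContinuousLinearMap.proj i).comp ((ContinuousLinearMap.snd ℂ (Fin m → ℂ) (Fin m → ℂ)).comp
      (ContinuousLinearMap.snd ℂ ℂ (VV m)))).analyticAt 0
  have hA' : ∀ i j, AnalyticAt ℂ (fun p : EE m => A p.1 i j) 0 := fun i j => by
    have h := AnalyticAt.comp (𝕜 := ℂ) (g := fun t => A t i j)
      (f := fun p : EE m => p.1) (x := (0 : EE m)) (hA i j) hfst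
    exact h
  apply hfst.prod
  apply AnalyticAt.prod
  · apply AnalyticAt.pi
    intro i
    exact ((hA' _ _).add (Finset.analyticAt_fun_sum _ fun j _ => (hA' _ _).mul (hx j))).sub
      ((hx i).mul ((hA' _ _).add (Finset.analyticAt_fun_sum _ fun j _ => (hA' _ _).mul (hx j))))
  · apply AnalyticAt.pi
    intro j
    exact (((hA' _ _).mul (hy j)).add (hA' _ _)).sub
      (Finset.analyticAt_fun_sum _ fun i _ => (hy i).mul (((hA' _ _).mul (hy j)).add (hA' _ _)))

end Y
section Z
variable {m : ℕ}

lemma mulVec_eq_zero {k : Type*} [Fintype k] [DecidableEq k] (M : Matrix k k ℂ)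
    (h : M.det ≠ 0) {v : k → ℂ} (hv : M *ᵥ v = 0) : v = 0 := by
  have h2 := congrArg (fun w => M⁻¹ *ᵥ w) hv
  simpa [Matrix.mulVec_mulVec, Matrix.nonsing_inv_mul M (isUnit_iff_ne_zero.2 h)] using h2
lemma Gmap_inr (A : ℂ → Matrix (Fin 1 ⊕ Fin m) (Fin 1 ⊕ Fin m) ℂ) (a₀ : ℂ)
    (D₀ : Matrix (Fin m) (Fin m) ℂ)
    (hA0 : A 0 = Matrix.fromBlocks (Matrix.of fun _ _ => a₀) 0 0 D₀) (q : VV m) :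
    Gmap A ((0 : ℂ), q) = ((0 : ℂ),
      ((D₀ - a₀ • 1) *ᵥ q.1, ((a₀ • 1 - D₀)ᵀ) *ᵥ q.2)) := by
  refine Prod.ext rfl (Prod.ext ?_ ?_)
  · funext i
    show (Fmap A ((0:ℂ), q)).1 i = _
    rw [Matrix.sub_mulVec, Matrix.smul_mulVec, Matrix.one_mulVec]
    simp only [Fmap, hA0, Matrix.fromBlocks_apply₁₁, Matrix.fromBlocks_apply₁₂,
      Matrix.fromBlocks_apply₂₁, Matrix.fromBlocks_apply₂₂, Matrix.of_apply,
      Matrix.zero_apply, zero_mul, mul_zero, Finset.sum_const_zero, add_zero, zero_add,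
      Matrix.mulVec, dotProduct, Pi.sub_apply, Pi.smul_apply, smul_eq_mul]
    ring
  · funext j
    show (Fmap A ((0:ℂ), q)).2 j = _
    rw [Matrix.mulVec_transpose]
    simp only [Fmap, hA0, Matrix.fromBlocks_apply₁₁, Matrix.fromBlocks_apply₁₂,
      Matrix.fromBlocks_apply₂₁, Matrix.fromBlocks_apply₂₂, Matrix.of_apply,
      Matrix.zero_apply, zero_mul, mul_zero, Finset.sum_const_zero, add_zero, zero_add,
      Matrix.vecMul, dotProduct, Pi.sub_apply, Pi.smul_apply, smul_eq_mul,
      Matrix.sub_apply, Matrix.smul_apply, Matrix.one_apply, mul_sub, mul_ite, mul_one,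
      Finset.sum_sub_distrib, Finset.sum_ite_eq']
    simp
    ring

lemma exists_psi (A : ℂ → Matrix (Fin 1 ⊕ Fin m) (Fin 1 ⊕ Fin m) ℂ)
    (hA : ∀ i j, AnalyticAt ℂ (fun t => A t i j) 0) (a₀ : ℂ)
    (D₀ : Matrix (Fin m) (Fin m) ℂ)
    (hA0 : A 0 = Matrix.fromBlocks (Matrix.of fun _ _ => a₀) 0 0 D₀)
    (hM1 : (D₀ - a₀ • 1).det ≠ 0) :
    ∃ ψ : ℂ → EE m, AnalyticAt ℂ ψ 0 ∧ ψ 0 = 0 ∧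
      ∀ᶠ t in nhds (0 : ℂ), Gmap A (ψ t) = (t, 0) := by
  set M1 : Matrix (Fin m) (Fin m) ℂ := D₀ - a₀ • 1 with hM1def
  set M2 : Matrix (Fin m) (Fin m) ℂ := (a₀ • 1 - D₀)ᵀ with hM2def
  have hM2 : M2.det ≠ 0 := by
    rw [hM2def, Matrix.det_transpose, show a₀ • (1 : Matrix (Fin m) (Fin m) ℂ) - D₀ = -M1 by
      rw [hM1def, neg_sub], Matrix.det_neg]
    simp only [ne_eq, mul_eq_zero, not_or]
    exact ⟨pow_ne_zero _ (by norm_num), hM1⟩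
  have hGana : AnalyticAt ℂ (Gmap A) 0 := Gmap_analytic A hA
  set L := fderiv ℂ (Gmap A) 0 with hLdef
  have hdiff : DifferentiableAt ℂ (Gmap A) 0 := hGana.differentiableAt
  -- claim 1
  have claim1 : ∀ w : EE m, (L w).1 = w.1 := by
    have h1 : fderiv ℂ (Prod.fst ∘ Gmap A) 0 =
        (ContinuousLinearMap.fst ℂ ℂ (VV m)).comp L := by
      rw [fderiv_comp 0 differentiableAt_fst hdiff, fderiv_fst]
    have h2 : (Prod.fst ∘ Gmap A) = fun p : EE m => p.1 := rfl
    rw [h2] at h1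
    have h3 : fderiv ℂ (fun p : EE m => p.1) 0 = ContinuousLinearMap.fst ℂ ℂ (VV m) :=
      fderiv_fst
    intro w
    have := congrArg (fun (T : EE m →L[ℂ] ℂ) => T w) (h3.symm.trans h1)
    exact (this.symm : _)
  -- claim 2
  set ι : VV m →L[ℂ] EE m := ContinuousLinearMap.inr ℂ ℂ (VV m) with hιdef
  set Ψ : VV m →L[ℂ] EE m := (0 : VV m →L[ℂ] ℂ).prod
    ((LinearMap.toContinuousLinearMap M1.mulVecLin).prodMap
     (LinearMap.toContinuousLinearMap M2.mulVecLin)) with hΨdef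
  have hGι : (Gmap A ∘ ι) = ⇑Ψ := by
    funext q
    show Gmap A ((0 : ℂ), q) = Ψ q
    rw [Gmap_inr A a₀ D₀ hA0 q]
    simp [hΨdef, ContinuousLinearMap.prod_apply, LinearMap.coe_toContinuousLinearMap',
      Matrix.mulVecLin_apply, Prod.map]
    exact ⟨by rw [hM1def], by rw [hM2def, Matrix.transpose_sub, Matrix.transpose_smul, Matrix.transpose_one]⟩
  have claim2 : ∀ q : VV m, L ((0 : ℂ), q) = ((0 : ℂ), (M1 *ᵥ q.1, M2 *ᵥ q.2)) := by
    have h1 : fderiv ℂ (Gmap A ∘ ι) 0 = L.comp ι := by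
      have hι0 : ι (0 : VV m) = 0 := map_zero ι
      rw [fderiv_comp 0 (by rw [hι0]; exact hdiff) ι.differentiableAt,
        ContinuousLinearMap.fderiv, hι0]
    have h2 : fderiv ℂ (Gmap A ∘ ι) 0 = Ψ := by rw [hGι, ContinuousLinearMap.fderiv]
    intro q
    have h3 := congrArg (fun (T : VV m →L[ℂ] EE m) => T q) (h1.symm.trans h2)
    have h4 : ι q = ((0 : ℂ), q) := rfl
    have h5 : Ψ q = ((0 : ℂ), (M1 *ᵥ q.1, M2 *ᵥ q.2)) := by
      simp [hΨdef, ContinuousLinearMap.prod_apply, LinearMap.coe_toContinuousLinearMap',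
        Matrix.mulVecLin_apply, Prod.map]
    calc L ((0:ℂ), q) = L (ι q) := by rw [h4]
    _ = Ψ q := h3
    _ = _ := h5
  have hker : ∀ w : EE m, L w = 0 → w = 0 := by
    intro w hw
    have hw1 : w.1 = 0 := by rw [← claim1 w, hw]; rfl
    have hw' : w = ((0 : ℂ), w.2) := by rw [← hw1]
    rw [hw'] at hw
    rw [claim2 w.2] at hw
    have e1 : M1 *ᵥ w.2.1 = 0 := congrArg (fun p : EE m => p.2.1) hw
    have e2 : M2 *ᵥ w.2.2 = 0 := congrArg (fun p : EE m => p.2.2) hw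
    rw [hw']
    have z1 := mulVec_eq_zero M1 hM1 e1
    have z2 := mulVec_eq_zero M2 hM2 e2
    rw [show w.2 = (w.2.1, w.2.2) from rfl, z1, z2]
    rfl
  have hinj : Function.Injective L := by
    intro w w' h
    have : L (w - w') = 0 := by rw [map_sub, h, sub_self]
    have := hker _ this
    exact sub_eq_zero.mp this
  have hsurj : Function.Surjective L :=
    LinearMap.injective_iff_surjective.mp (show Function.Injective (L : EE m →ₗ[ℂ] EE m) from hinj)
  set eL : EE m ≃L[ℂ] EE m :=
    (LinearEquiv.ofBijective (L : EE m →ₗ[ℂ] EE m) ⟨hinj, hsurj⟩).toContinuousLinearEquiv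
    with heLdef
  have hcoeL : (eL : EE m →L[ℂ] EE m) = L := ContinuousLinearMap.ext fun w => rfl
  have hstrict : HasStrictFDerivAt (Gmap A) (eL : EE m →L[ℂ] EE m) 0 := by
    rw [hcoeL]; exact hGana.hasStrictFDerivAt
  set f := hstrict.toOpenPartialHomeomorph (Gmap A) with hfdef
  have hfcoe : ⇑f = Gmap A := hstrict.toOpenPartialHomeomorph_coe
  have hfsource : (0 : EE m) ∈ f.source := hstrict.mem_toOpenPartialHomeomorph_source
  have hG0 : Gmap A 0 = 0 := by
    have := Gmap_inr A a₀ D₀ hA0 0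
    simp at this; exact this
  have hf0 : f 0 = 0 := by rw [hfcoe]; exact hG0
  have hfana : AnalyticAt ℂ (⇑f) 0 := by rw [hfcoe]; exact hGana
  have hfderiv : fderiv ℂ (⇑f) 0 = (eL : EE m →L[ℂ] EE m) := by
    rw [hfcoe, hcoeL]
  have hsymm := f.analyticAt_symm' hfsource hfana hfderiv
  rw [hf0] at hsymm
  refine ⟨fun t => f.symm (t, 0), ?_, ?_, ?_⟩
  · have hin : AnalyticAt ℂ (fun t : ℂ => ((t, 0) : EE m)) 0 :=
      analyticAt_id.prod analyticAt_const
    have := AnalyticAt.comp (𝕜 := ℂ) (g := ⇑f.symm) (f := fun t : ℂ => ((t, 0) : EE m))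
      (x := (0 : ℂ)) hsymm hin
    exact this
  · show f.symm ((0 : ℂ), (0 : VV m)) = 0
    have : ((0 : ℂ), (0 : VV m)) = f 0 := by rw [hf0]; rfl
    rw [this]
    exact f.left_inv hfsource
  · have htarget : f.target ∈ nhds (0 : EE m) :=
      f.open_target.mem_nhds (hf0 ▸ f.map_source hfsource)
    have hcont : ContinuousAt (fun t : ℂ => ((t, 0) : EE m)) 0 :=
      (continuous_id.prodMk continuous_const).continuousAt
    have hpre := hcont.preimage_mem_nhds (by exact htarget)
    filter_upwards [hpre] with t ht
    have := f.right_inv ht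
    rw [hfcoe] at this
    exact this
end Z

lemma key_s15 (m : ℕ) (A : ℂ → Matrix (Fin 1 ⊕ Fin m) (Fin 1 ⊕ Fin m) ℂ)
    (hA : ∀ i j, AnalyticAt ℂ (fun t => A t i j) 0) (a₀ : ℂ)
    (D₀ : Matrix (Fin m) (Fin m) ℂ)
    (hA0 : A 0 = Matrix.fromBlocks (Matrix.of fun _ _ => a₀) 0 0 D₀)
    (hM1 : (D₀ - a₀ • 1).det ≠ 0) :
    ∃ ε > (0 : ℝ), ∃ C : ℂ → Matrix (Fin 1 ⊕ Fin m) (Fin 1 ⊕ Fin m) ℂ,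
        C 0 = 1
        ∧ (∀ i j, ∀ t ∈ Metric.ball (0 : ℂ) ε, AnalyticAt ℂ (fun s => C s i j) t)
        ∧ (∀ t ∈ Metric.ball (0 : ℂ) ε, (C t).det = 1)
        ∧ (∀ t ∈ Metric.ball (0 : ℂ) ε,
            (∀ i : Fin m, (C t * A t * (C t)⁻¹) (Sum.inr i) (Sum.inl 0) = 0)
            ∧ (∀ j : Fin m, (C t * A t * (C t)⁻¹) (Sum.inl 0) (Sum.inr j) = 0)) := by
  obtain ⟨ψ, hψana, hψ0, hev⟩ := exists_psi A hA a₀ D₀ hA0 hM1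
  set x : ℂ → Fin m → ℂ := fun t => (ψ t).2.1 with hxdef
  set y : ℂ → Fin m → ℂ := fun t => (ψ t).2.2 with hydef
  have hx0 : x 0 = 0 := by rw [hxdef]; simp [hψ0]
  have hy0 : y 0 = 0 := by rw [hydef]; simp [hψ0]
  have hxy : ∀ t : ℂ, AnalyticAt ℂ ψ t →
      (∀ i, AnalyticAt ℂ (fun s => x s i) t) ∧ (∀ i, AnalyticAt ℂ (fun s => y s i) t) := by
    intro t ht
    constructor
    · intro i
      have h := AnalyticAt.comp (𝕜 := ℂ)
        (g := fun w : EE m => w.2.1 i) (f := ψ) (x := t)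
        (((ContinuousLinearMap.proj (R := ℂ) (φ := fun _ : Fin m => ℂ) i).comp
          ((ContinuousLinearMap.fst ℂ (Fin m → ℂ) (Fin m → ℂ)).comp
            (ContinuousLinearMap.snd ℂ ℂ (VV m)))).analyticAt _) ht
      exact h
    · intro i
      have h := AnalyticAt.comp (𝕜 := ℂ)
        (g := fun w : EE m => w.2.2 i) (f := ψ) (x := t)
        (((ContinuousLinearMap.proj (R := ℂ) (φ := fun _ : Fin m => ℂ) i).comp
          ((ContinuousLinearMap.snd ℂ (Fin m → ℂ) (Fin m → ℂ)).comp
            (ContinuousLinearMap.snd ℂ ℂ (VV m)))).analyticAt _) ht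
      exact h
  have Ea : ∀ᶠ t in nhds (0 : ℂ), AnalyticAt ℂ ψ t := hψana.eventually_analyticAt
  have Ec : ∀ᶠ t in nhds (0 : ℂ), (Smat' x y t).det ≠ 0 := by
    have hcont : ContinuousAt (fun t => (Smat' x y t).det) 0 :=
      (analyticAt_det' _ 0 (Smat'_analytic x y 0 (hxy 0 hψana).1 (hxy 0 hψana).2)).continuousAt
    have hS0 : (Smat' x y 0).det = 1 := by rw [Smat'_zero x y hx0 hy0, Matrix.det_one]
    exact hcont.eventually_ne (by rw [hS0]; norm_num)
  obtain ⟨ε, hε, hball⟩ := Metric.eventually_nhds_iff_ball.mp (Ea.and (hev.and Ec))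
  refine ⟨ε, hε, Cmat x y, Cmat_zero x y hx0 hy0, ?_, ?_, ?_⟩
  · intro i j t ht
    obtain ⟨h1, _, h3⟩ := hball t ht
    exact Cmat_analytic x y t (hxy t h1).1 (hxy t h1).2 h3 i j
  · intro t ht
    exact Cmat_det x y t (hball t ht).2.2
  · intro t ht
    obtain ⟨h1, h2, h3⟩ := hball t ht
    have hF : Fmap A (t, (x t, y t)) = 0 := by
      have h21 : (ψ t).1 = t := congrArg Prod.fst h2
      have h22 : Fmap A (ψ t) = 0 := congrArg Prod.snd h2
      have heta : ψ t = (t, (x t, y t)) := Prod.ext h21 rfl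
      rw [heta] at h22
      exact h22
    have hAS := AS_eq A x y t hF
    have hconj := Cmat_conj A x y t h3 (Bmat A x y t) _ _ rfl
      (by rw [show Smat' x y t = Smat x y t from rfl]; exact hAS)
    constructor
    · intro i
      rw [hconj]
      simp [Matrix.fromBlocks]
    · intro j
      rw [hconj]
      simp [Matrix.fromBlocks]

/-- If `A : ℂ → SL(n,ℂ)` is analytic near 0 with
`A(0) = λ^{−1}·diag(α, J_{n−1})`, `α = λ^n ≠ 1`, then there is an analytic curve
`C(t)` in SL(n,ℂ) with `C(0) = I` such that `C(t) A(t) C(t)^{−1}` is block diagonal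
(vanishing first row tail and first column tail) for all small `t`. -/
theorem stmt15 (n : ℕ) (hn : 2 ≤ n) (lam : ℂ) (hlam : lam ≠ 0) (halpha : lam ^ n ≠ 1)
    (A : ℂ → Matrix (Fin 1 ⊕ Fin (n - 1)) (Fin 1 ⊕ Fin (n - 1)) ℂ)
    (hAanalytic : ∀ i j, AnalyticAt ℂ (fun t => A t i j) 0)
    (hAdet : ∀ t, (A t).det = 1)
    (hA0 : A 0 = lam⁻¹ • Matrix.fromBlocks (Matrix.of fun _ _ => lam ^ n) 0 0
      (Jmat (n - 1))) :
    ∃ ε > (0 : ℝ),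
      ∃ C : ℂ → Matrix (Fin 1 ⊕ Fin (n - 1)) (Fin 1 ⊕ Fin (n - 1)) ℂ,
        C 0 = 1
        ∧ (∀ i j, ∀ t ∈ Metric.ball (0 : ℂ) ε, AnalyticAt ℂ (fun s => C s i j) t)
        ∧ (∀ t ∈ Metric.ball (0 : ℂ) ε, (C t).det = 1)
        ∧ (∀ t ∈ Metric.ball (0 : ℂ) ε,
            (∀ i : Fin (n - 1), (C t * A t * (C t)⁻¹) (Sum.inr i) (Sum.inl 0) = 0)
            ∧ (∀ j : Fin (n - 1), (C t * A t * (C t)⁻¹) (Sum.inl 0) (Sum.inr j) = 0)) := by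

  set a₀ : ℂ := lam⁻¹ * lam ^ n with ha₀def
  set D₀ : Matrix (Fin (n - 1)) (Fin (n - 1)) ℂ := lam⁻¹ • Jmat (n - 1) with hD₀def
  have hA0' : A 0 = Matrix.fromBlocks (Matrix.of fun _ _ => a₀) 0 0 D₀ := by
    rw [hA0]
    ext i j
    cases i <;> cases j <;>
      simp [Matrix.fromBlocks, Matrix.smul_apply, smul_eq_mul, ha₀def, hD₀def]
  have hdiagne : lam⁻¹ - a₀ ≠ 0 := by
    rw [ha₀def]
    intro h
    apply halpha
    have h2 : lam⁻¹ * (1 - lam ^ n) = 0 := by ring_nf; ring_nf at h; linear_combination h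
    rcases mul_eq_zero.mp h2 with h3 | h3
    · exact absurd h3 (inv_ne_zero hlam)
    · linear_combination -h3
  have hM1 : (D₀ - a₀ • (1 : Matrix (Fin (n - 1)) (Fin (n - 1)) ℂ)).det ≠ 0 := by
    have htri : (D₀ - a₀ • (1 : Matrix (Fin (n - 1)) (Fin (n - 1)) ℂ)).BlockTriangular id := by
      intro i j hij
      have hJ := Jmat_blockTriangular (n - 1) hij
      simp only [hD₀def, Matrix.sub_apply, Matrix.smul_apply, smul_eq_mul]
      rw [hJ, Matrix.one_apply_ne (by intro h; subst h; exact lt_irrefl _ hij)]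
      ring
    rw [Matrix.det_of_upperTriangular htri]
    have hdiag : ∀ i : Fin (n - 1), (D₀ - a₀ • (1 : Matrix (Fin (n - 1)) (Fin (n - 1)) ℂ)) i i = lam⁻¹ - a₀ := by
      intro i
      have hN : Nmat (n - 1) i i = 0 := by simp [Nmat]
      simp [hD₀def, Jmat, Matrix.one_apply, hN]
    rw [Finset.prod_congr rfl fun i _ => hdiag i, Finset.prod_const]
    exact pow_ne_zero _ hdiagne
  exact key_s15 (n - 1) A hAanalytic a₀ D₀ hA0' hM1

end
end
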